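/- arXiv:1203.3727 — 10 statements merged into one kernel-verified Lean document; each statement's English description precedes it below -/
import Mathlib

section
/- Let V be a finite set, r ≥ 2, and let a 'constraint' be an r-element subset S of V together with a 0/1 evaluation c on rankings (linear orders) of S. A 'conflict' is a subset C ⊆ V such that no linear order of C satisfies all constraints on r-subsets of C. Suppose {C₁, …, C_m} is a family of conflicts whose pairwise intersections all equal a single common constraint S (a sunflower with center S), with m > k. Then any set F of at most k constraints whose editing yields a consistent instance must contain S. -/
/-- A ranking `r`-CSP constraint system on vertex set `V`: for each `r`-subset `S`,
`sat S σ` says the ranking `σ` (given by positions in `ℕ`) satisfies the constraint on `S`.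
The evaluation only depends on the relative order of the vertices of `S`. -/
structure RankingCSP (V : Type*) (r : ℕ) where
  sat : Finset V → (V → ℕ) → Prop
  invariant : ∀ S : Finset V, ∀ σ τ : V → ℕ,
    (∀ u ∈ S, ∀ v ∈ S, (σ u < σ v ↔ τ u < τ v)) → (sat S σ ↔ sat S τ)

/-- `C` is a conflict: no ranking of `C` satisfies all constraints on `r`-subsets of `C`. -/
def IsConflict {V : Type*} {r : ℕ} (c : RankingCSP V r) (C : Finset V) : Prop :=
  ¬ ∃ σ : V → ℕ, Set.InjOn σ ↑C ∧ ∀ S ⊆ C, S.card = r → c.sat S σ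

/-- Sunflower lemma: if `{C 1, …, C m}` is a family of conflicts pairwise intersecting
exactly in the constraint `S` (the center), with `m > k`, then any set `F` of at most `k`
constraints whose editing yields a consistent instance must contain `S`. -/
theorem sunflower_center_must_be_edited
    {V : Type*} [Fintype V] [DecidableEq V] {r k m : ℕ} (hr : 2 ≤ r)
    (c : RankingCSP V r) (S : Finset V) (hS : S.card = r)
    (C : Fin m → Finset V)
    (hconf : ∀ i, IsConflict c (C i))
    (hcenter : ∀ i, S ⊆ C i)
    (hpair : ∀ i j, i ≠ j → C i ∩ C j = S)
    (hm : k < m)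
    (F : Finset (Finset V)) (hF : F.card ≤ k)
    -- `F` is an edition: editing the constraints in `F` yields a consistent instance,
    -- witnessed by the edited system `c'` and the consistent ranking `σ`
    (c' : RankingCSP V r) (hagree : ∀ T : Finset V, T ∉ F → c'.sat T = c.sat T)
    (σ : V → ℕ) (hσ : Function.Injective σ)
    (hcons : ∀ T : Finset V, T.card = r → c'.sat T σ) :
    S ∈ F := by
  by_contra hSF
  -- For each conflict, some r-subset of it lies in F
  have hex : ∀ i : Fin m, ∃ T ∈ F, T ⊆ C i ∧ T.card = r := by
    intro i
    by_contra hno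
    push_neg at hno
    apply hconf i
    refine ⟨σ, hσ.injOn, fun T hTC hTr => ?_⟩
    have hTF : T ∉ F := fun h => (hno T h hTC) hTr
    rw [← hagree T hTF]
    exact hcons T hTr
  choose T hTF hTC hTr using hex
  -- pigeonhole: m > k ≥ |F|
  have hcard : Fintype.card { x // x ∈ F } < Fintype.card (Fin m) := by
    simpa using lt_of_le_of_lt hF hm
  obtain ⟨i, j, hij, heq⟩ :=
    Fintype.exists_ne_map_eq_of_card_lt (fun i : Fin m => (⟨T i, hTF i⟩ : { x // x ∈ F })) hcard
  have hTeq : T i = T j := congrArg Subtype.val heq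
  have hsub : T i ⊆ S := by
    rw [← hpair i j hij]
    exact Finset.subset_inter (hTC i) (hTeq ▸ hTC j)
  have : T i = S := Finset.eq_of_subset_of_card_le hsub (by rw [hTr i, hS])
  exact hSF (this ▸ hTF i)
end

section
/- Let Π be an l_r-simply characterized ranking r-CSP, and let R_σ = (V, c, σ) be an ordered instance with at most p ≥ 1 inconsistent constraints. If |V| > p(l_r − r) + (l_r − r)(k+1) + r, then there exists a simple sunflower {C₁, …, C_m} with m > k; i.e., there exist m > k sets of l_r vertices, each containing a common inconsistent constraint S, pairwise intersecting exactly in S, and each inducing exactly one inconsistent constraint (namely S). -/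
/-- If an `l_r`-simply characterized ranking `r`-CSP, ordered under `σ`, has at most `p ≥ 1`
inconsistent constraints (and at least one), and `|V| > p(l_r − r) + (l_r − r)(k+1) + r`, then
there is a simple sunflower `{C 1, …, C m}` with `m > k`: `m > k` sets of `l_r` vertices, each
containing a common inconsistent constraint `S`, pairwise intersecting exactly in `S`, each
inducing exactly one inconsistent constraint (namely `S`), and each being a conflict. -/
theorem simple_sunflower_exists
    {V : Type*} [Fintype V] [DecidableEq V] {r lr k p : ℕ}
    (hr : 2 ≤ r) (hrlr : r ≤ lr)
    (c : RankingCSP V r)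
    -- the problem is l_r-simply characterized (stated for the instance at hand)
    (hsimple : ∀ σ : V → ℕ, Function.Injective σ → ∀ C : Finset V, C.card = lr →
      (∃! S : Finset V, S ⊆ C ∧ S.card = r ∧ ¬ c.sat S σ) → IsConflict c C)
    (σ : V → ℕ) (hσ : Function.Injective σ)
    (hp1 : 1 ≤ p)
    (hple : {S : Finset V | S.card = r ∧ ¬ c.sat S σ}.ncard ≤ p)
    (hex : ∃ S : Finset V, S.card = r ∧ ¬ c.sat S σ)
    (hV : p * (lr - r) + (lr - r) * (k + 1) + r < Fintype.card V) :
    ∃ (m : ℕ) (C : Fin m → Finset V) (S : Finset V), k < m ∧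
      S.card = r ∧ ¬ c.sat S σ ∧
      (∀ i, (C i).card = lr) ∧ (∀ i, S ⊆ C i) ∧
      (∀ i j, i ≠ j → C i ∩ C j = S) ∧
      (∀ i, ∃! T : Finset V, T ⊆ C i ∧ T.card = r ∧ ¬ c.sat T σ) ∧
      (∀ i, IsConflict c (C i)) := by

  classical
  obtain ⟨S, hSr, hSbad⟩ := hex
  have hVpos : 0 < Fintype.card V := by omega
  have hVne : Nonempty V := Fintype.card_pos_iff.mp hVpos
  set Bad : Finset (Finset V) :=
    Finset.univ.filter (fun T => T.card = r ∧ ¬ c.sat T σ) with hBadDef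
  have hSmem : S ∈ Bad := by simp [hBadDef, hSr, hSbad]
  have hBadcard : Bad.card ≤ p := by
    have hcoe : (Bad : Set (Finset V)) = {T : Finset V | T.card = r ∧ ¬ c.sat T σ} := by
      ext T; simp [hBadDef]
    have := hple
    rw [← hcoe, Set.ncard_coe_finset] at this
    exact this
  -- choose a witness vertex outside S for each bad constraint ≠ S
  have pickspec : ∀ T ∈ Bad, T ≠ S → (T \ S).Nonempty := by
    intro T hT hTS
    rw [Finset.sdiff_nonempty]
    intro hsub
    have hTr : T.card = r := by
      simp only [hBadDef, Finset.mem_filter] at hT; exact hT.2.1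
    exact hTS (Finset.eq_of_subset_of_card_le hsub (by omega))
  let pick : Finset V → V := fun T =>
    if h : (T \ S).Nonempty then h.choose else Classical.arbitrary V
  have pickmem : ∀ T ∈ Bad, T ≠ S → pick T ∈ T \ S := by
    intro T hT hTS
    have h := pickspec T hT hTS
    simp only [pick, dif_pos h]
    exact h.choose_spec
  set F : Finset V := S ∪ (Bad \ {S}).image pick with hFDef
  have hSF : S ⊆ F := Finset.subset_union_left
  have hFcard : F.card ≤ r + p := by
    calc F.card ≤ S.card + ((Bad \ {S}).image pick).card := Finset.card_union_le _ _
      _ ≤ S.card + (Bad \ {S}).card := by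
          exact Nat.add_le_add_left (Finset.card_image_le) _
      _ ≤ r + p := by
          have h1 : (Bad \ {S}).card ≤ Bad.card := Finset.card_le_card (Finset.sdiff_subset)
          omega
  have havail : (k+1) * (lr - r) ≤ (Finset.univ \ F).card := by
    have hcards : (Finset.univ \ F).card = Fintype.card V - F.card := by
      rw [Finset.card_sdiff_of_subset (Finset.subset_univ F), Finset.card_univ]
    rcases Nat.eq_zero_or_pos (lr - r) with h0 | hpos
    · simp [h0]
    · have hp' : p ≤ p * (lr - r) := Nat.le_mul_of_pos_right p hpos
      have : (lr - r) * (k+1) = (k+1) * (lr - r) := Nat.mul_comm _ _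
      omega
  obtain ⟨t, hts, htcard⟩ := Finset.exists_subset_card_eq havail
  -- the injective family of fresh vertices
  let g : Fin (k+1) → Fin (lr - r) → V := fun i j =>
    ((t.equivFin.symm (finCongr htcard.symm (finProdFinEquiv (i, j)))) : V)
  have hgmem : ∀ i j, g i j ∈ t := fun i j => (t.equivFin.symm _).2
  have hginj : ∀ i j i' j', g i j = g i' j' → i = i' ∧ j = j' := by
    intro i j i' j' h
    have h1 : (t.equivFin.symm (finCongr htcard.symm (finProdFinEquiv (i, j))))
        = (t.equivFin.symm (finCongr htcard.symm (finProdFinEquiv (i', j')))) :=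
      Subtype.ext h
    have h2 := t.equivFin.symm.injective h1
    have h3 := (finCongr htcard.symm).injective h2
    have h4 := finProdFinEquiv.injective h3
    exact ⟨congrArg Prod.fst h4, congrArg Prod.snd h4⟩
  have hgF : ∀ i j, g i j ∉ F := by
    intro i j hmem
    have := hts (hgmem i j)
    rw [Finset.mem_sdiff] at this
    exact this.2 hmem
  let P : Fin (k+1) → Finset V := fun i => Finset.univ.image (g i)
  have hPcard : ∀ i, (P i).card = lr - r := by
    intro i
    rw [Finset.card_image_of_injective _ (fun j j' h => (hginj i j i j' h).2),
      Finset.card_univ, Fintype.card_fin]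
  have hPF : ∀ i, ∀ v ∈ P i, v ∉ F := by
    intro i v hv
    simp only [P, Finset.mem_image] at hv
    obtain ⟨j, _, rfl⟩ := hv
    exact hgF i j
  have hPS : ∀ i, Disjoint S (P i) := by
    intro i
    rw [Finset.disjoint_left]
    intro v hvS hvP
    exact hPF i v hvP (hSF hvS)
  have hPP : ∀ i j, i ≠ j → Disjoint (P i) (P j) := by
    intro i j hij
    rw [Finset.disjoint_left]
    intro v hvi hvj
    simp only [P, Finset.mem_image] at hvi hvj
    obtain ⟨a, _, ha⟩ := hvi
    obtain ⟨b, _, hb⟩ := hvj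
    exact hij (hginj i a j b (ha.trans hb.symm)).1
  refine ⟨k+1, fun i => S ∪ P i, S, Nat.lt_succ_self k, hSr, hSbad, ?_, ?_, ?_, ?_, ?_⟩
  · intro i
    rw [Finset.card_union_of_disjoint (hPS i), hSr, hPcard]
    omega
  · intro i; exact Finset.subset_union_left
  · intro i j hij
    apply Finset.Subset.antisymm
    · intro v hv
      rw [Finset.mem_inter, Finset.mem_union, Finset.mem_union] at hv
      rcases hv.1 with h1 | h1
      · exact h1
      · rcases hv.2 with h2 | h2
        · exact h2
        · exact absurd (Finset.disjoint_left.mp (hPP i j hij) h1 h2) (fun h => h)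
    · exact Finset.subset_inter Finset.subset_union_left Finset.subset_union_left
  · intro i
    refine ⟨S, ⟨Finset.subset_union_left, hSr, hSbad⟩, ?_⟩
    rintro T ⟨hTsub, hTr, hTbad⟩
    by_contra hTS
    have hTmem : T ∈ Bad := by simp [hBadDef, hTr, hTbad]
    have hv := pickmem T hTmem hTS
    rw [Finset.mem_sdiff] at hv
    have hvF : pick T ∈ F := by
      rw [hFDef, Finset.mem_union]
      right
      exact Finset.mem_image_of_mem pick (by
        rw [Finset.mem_sdiff, Finset.mem_singleton]; exact ⟨hTmem, hTS⟩)
    have hvC : pick T ∈ S ∪ P i := hTsub hv.1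
    rw [Finset.mem_union] at hvC
    rcases hvC with h | h
    · exact hv.2 h
    · exact hPF i _ h hvF
  · intro i
    apply hsimple σ hσ _ ?_ ?_
    · rw [Finset.card_union_of_disjoint (hPS i), hSr, hPcard]; omega
    · refine ⟨S, ⟨Finset.subset_union_left, hSr, hSbad⟩, ?_⟩
      rintro T ⟨hTsub, hTr, hTbad⟩
      by_contra hTS
      have hTmem : T ∈ Bad := by simp [hBadDef, hTr, hTbad]
      have hv := pickmem T hTmem hTS
      rw [Finset.mem_sdiff] at hv
      have hvF : pick T ∈ F := by
        rw [hFDef, Finset.mem_union]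
        right
        exact Finset.mem_image_of_mem pick (by
          rw [Finset.mem_sdiff, Finset.mem_singleton]; exact ⟨hTmem, hTS⟩)
      have hvC : pick T ∈ S ∪ P i := hTsub hv.1
      rw [Finset.mem_union] at hvC
      rcases hvC with h | h
      · exact hv.2 h
      · exact hPF i _ h hvF
end

section
/- Any strongly fragile ranking r-CSP with r ≥ 3 is (r+1)-simply characterized: if R_σ = (V, c, σ) is an ordered instance and C is a set of r+1 vertices such that the induced instance on C contains exactly one constraint inconsistent with σ, then C is a conflict (no ranking of C satisfies all constraints induced by C). -/
/-- Any strongly fragile ranking `r`-CSP with `r ≥ 3` is `(r+1)`-simply characterized: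
if `C` is a set of `r+1` vertices such that the instance induced on `C` contains exactly one
constraint inconsistent with the ranking `σ`, then `C` is a conflict. -/
theorem strongly_fragile_simply_characterized
    {V : Type*} [DecidableEq V] {r : ℕ} (hr : 3 ≤ r)
    (c : RankingCSP V r)
    -- strongly fragile: each constraint is satisfied by exactly one ranking of its
    -- vertices (up to order-equivalence) and no other
    (hfrag : ∀ S : Finset V, S.card = r →
      (∃ σ : V → ℕ, Set.InjOn σ ↑S ∧ c.sat S σ) ∧
      (∀ σ τ : V → ℕ, Set.InjOn σ ↑S → Set.InjOn τ ↑S → c.sat S σ → c.sat S τ →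
        ∀ u ∈ S, ∀ v ∈ S, (σ u < σ v ↔ τ u < τ v)))
    (σ : V → ℕ) (hσ : Function.Injective σ)
    (C : Finset V) (hC : C.card = r + 1)
    (huniq : ∃! S : Finset V, S ⊆ C ∧ S.card = r ∧ ¬ c.sat S σ) :
    IsConflict c C := by
  rintro ⟨τ, hτinj, hτsat⟩
  obtain ⟨S₀, ⟨hS₀C, hS₀card, hS₀not⟩, hS₀uniq⟩ := huniq
  -- Any r-subset of C other than S₀ is satisfied by σ
  have hsatσ : ∀ S ⊆ C, S.card = r → S ≠ S₀ → c.sat S σ := by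
    intro S hSC hScard hne
    by_contra h
    exact hne (hS₀uniq S ⟨hSC, hScard, h⟩)
  -- σ and τ order C the same way
  have key : ∀ u ∈ C, ∀ v ∈ C, (σ u < σ v ↔ τ u < τ v) := by
    intro u hu v hv
    -- find w ∈ C, w ≠ u, w ≠ v, with C.erase w ≠ S₀
    have hcard2 : 1 < ((C.erase u).erase v).card := by
      have h1 : C.card - 1 ≤ (C.erase u).card := Finset.pred_card_le_card_erase
      have h2 : (C.erase u).card - 1 ≤ ((C.erase u).erase v).card :=
        Finset.pred_card_le_card_erase
      omega
    obtain ⟨w, hw, w', hw', hww'⟩ := Finset.one_lt_card.mp hcard2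
    have claim : ∀ x ∈ (C.erase u).erase v, C.erase x ≠ S₀ → (σ u < σ v ↔ τ u < τ v) := by
      intro x hx hxne
      have hxC : x ∈ C := Finset.mem_of_mem_erase (Finset.mem_of_mem_erase hx)
      have hxu : x ≠ u := Finset.ne_of_mem_erase (Finset.mem_of_mem_erase hx)
      have hxv : x ≠ v := Finset.ne_of_mem_erase hx
      set S := C.erase x with hSdef
      have hSC : S ⊆ C := Finset.erase_subset _ _
      have hScard : S.card = r := by
        rw [hSdef, Finset.card_erase_of_mem hxC, hC]; omega
      have huS : u ∈ S := Finset.mem_erase.mpr ⟨fun h => hxu h.symm, hu⟩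
      have hvS : v ∈ S := Finset.mem_erase.mpr ⟨fun h => hxv h.symm, hv⟩
      have hσS : c.sat S σ := hsatσ S hSC hScard hxne
      have hτS : c.sat S τ := hτsat S hSC hScard
      exact (hfrag S hScard).2 σ τ hσ.injOn (hτinj.mono (by exact_mod_cast hSC))
        hσS hτS u huS v hvS
    by_cases h : C.erase w = S₀
    · apply claim w' hw'
      intro h'
      have : w' ∈ C.erase w' := by
        rw [h', ← h]
        exact Finset.mem_erase.mpr ⟨hww'.symm,
          Finset.mem_of_mem_erase (Finset.mem_of_mem_erase hw')⟩
      exact (Finset.notMem_erase _ _) this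
    · exact claim w hw h
  -- contradiction on S₀
  have : c.sat S₀ σ ↔ c.sat S₀ τ :=
    c.invariant S₀ σ τ (fun u hu v hv => key u (hS₀C hu) v (hS₀C hv))
  exact hS₀not (this.mpr (hτsat S₀ hS₀C hS₀card))
end

section
/- Consider the r-Dense Feedback Arc Set problem: each r-subset S of V has one selected vertex sel(S) ∈ S, and S is satisfied by a ranking σ iff every u ∈ S \ {sel(S)} satisfies u <_σ sel(S). Let C = {s₁, …, s_{r+1}} be r+1 vertices with s₁ <_σ … <_σ s_{r+1}, and suppose exactly one constraint S induced by C is inconsistent with σ. Then C is a conflict if and only if S is unconsecutive (S ≠ {s₁,…,s_r} and S ≠ {s₂,…,s_{r+1}}) or S = {s₂, …, s_{r+1}}. -/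
/-- In `r`-Dense Feedback Arc Set, the constraint on an `r`-subset `S` with selected
vertex `sel S` is satisfied by a ranking `σ` iff every other vertex of `S` precedes
`sel S` in `σ`. -/
def fastSat {V : Type*} (sel : Finset V → V) (S : Finset V) (σ : V → ℕ) : Prop :=
  ∀ u ∈ S, u ≠ sel S → σ u < σ (sel S)

/-- `C` is a conflict for the `r`-FAST instance `sel`: no ranking of `C` satisfies all
constraints on `r`-subsets of `C`. -/
def fastConflict {V : Type*} (r : ℕ) (sel : Finset V → V) (C : Finset V) : Prop :=
  ¬ ∃ σ : V → ℕ, Set.InjOn σ ↑C ∧ ∀ S ⊆ C, S.card = r → fastSat sel S σ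

/-- Conflict characterization for `r`-FAST: if `C = {s₁ <_σ … <_σ s_{r+1}}` induces exactly
one inconsistent constraint `S`, then `C` is a conflict iff `S` is unconsecutive
(i.e. `S ≠ {s₁,…,s_r}` and `S ≠ {s₂,…,s_{r+1}}`) or `S = {s₂,…,s_{r+1}}`. -/
theorem fast_conflict_characterization
    {V : Type*} [DecidableEq V] {r : ℕ} (hr : 3 ≤ r)
    (sel : Finset V → V) (hsel : ∀ S : Finset V, S.card = r → sel S ∈ S)
    (σ : V → ℕ) (s : Fin (r + 1) → V)
    (hmono : ∀ i j : Fin (r + 1), i < j → σ (s i) < σ (s j))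
    (C : Finset V) (hC : C = Finset.image s Finset.univ)
    (S : Finset V) (hSC : S ⊆ C) (hScard : S.card = r)
    (hSbad : ¬ fastSat sel S σ)
    (huniq : ∀ T ⊆ C, T.card = r → ¬ fastSat sel T σ → T = S) :
    (fastConflict r sel C ↔
      ((S ≠ Finset.image (fun i : Fin r => s i.castSucc) Finset.univ ∧
        S ≠ Finset.image (fun i : Fin r => s i.succ) Finset.univ) ∨
       S = Finset.image (fun i : Fin r => s i.succ) Finset.univ)) := by
  set last : Fin (r + 1) := Fin.last r with hlastdef
  have hf : StrictMono (fun i => σ (s i)) := fun i j h => hmono i j h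
  have sinj : Function.Injective s := fun i j h => hf.injective (by simp only [h])
  have hmemC : ∀ v, v ∈ C ↔ ∃ i, s i = v := by
    intro v; rw [hC]; simp
  have hsC : ∀ i, s i ∈ C := fun i => (hmemC _).2 ⟨i, rfl⟩
  have hCcard : C.card = r + 1 := by
    rw [hC, Finset.card_image_of_injective _ sinj, Finset.card_univ, Fintype.card_fin]
  have herase : ∀ T ⊆ C, T.card = r → ∃ j, T = C.erase (s j) := by
    intro T hTC hTcard
    have hex : ∃ v ∈ C, v ∉ T := by
      by_contra h
      push_neg at h
      have := Finset.card_le_card (fun v hv => h v hv : C ⊆ T)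
      omega
    obtain ⟨v, hvC, hvT⟩ := hex
    obtain ⟨j, rfl⟩ := (hmemC v).1 hvC
    refine ⟨j, (Finset.eq_of_subset_of_card_le
      (fun x hx => Finset.mem_erase.2 ⟨fun he => hvT (by rw [← he]; exact hx), hTC hx⟩)
      ?_).symm.symm⟩
    rw [Finset.card_erase_of_mem hvC, hCcard, hTcard]
    omega
  have heracard : ∀ j : Fin (r + 1), (C.erase (s j)).card = r := fun j => by
    rw [Finset.card_erase_of_mem (hsC j), hCcard]
    omega
  have hmemerase : ∀ j m : Fin (r + 1), s m ∈ C.erase (s j) ↔ m ≠ j := by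
    intro j m
    rw [Finset.mem_erase]
    constructor
    · rintro ⟨h, _⟩ rfl; exact h rfl
    · exact fun h => ⟨fun he => h (sinj he), hsC m⟩
  have hlt_last : ∀ m : Fin (r + 1), m ≠ last → σ (s m) < σ (s last) :=
    fun m hm => hf (lt_of_le_of_ne (Fin.le_last m) hm)
  -- selected vertex of a σ-satisfied erasure is the σ-max, i.e. `s last`
  have hselsat : ∀ j : Fin (r + 1), j ≠ last →
      fastSat sel (C.erase (s j)) σ → sel (C.erase (s j)) = s last := by
    intro j hj hsat
    have hmem := hsel _ (heracard j)
    obtain ⟨m, hm⟩ := (hmemC _).1 (Finset.mem_of_mem_erase hmem)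
    by_cases hml : m = last
    · rw [← hm, hml]
    · exfalso
      have h1 : σ (s last) < σ (sel (C.erase (s j))) :=
        hsat (s last) ((hmemerase j last).2 (Ne.symm hj))
          (by rw [← hm]; exact fun he => hml (sinj he).symm)
      rw [← hm] at h1
      exact absurd h1 (not_lt.2 (le_of_lt (hlt_last m hml)))
  obtain ⟨i₀, hS⟩ := herase S hSC hScard
  -- identify the two consecutive sets as erasures
  have hfirst : Finset.image (fun i : Fin r => s i.castSucc) Finset.univ = C.erase (s last) := by
    ext v
    simp only [Finset.mem_image, Finset.mem_univ, true_and]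
    constructor
    · rintro ⟨i, rfl⟩
      exact (hmemerase last i.castSucc).2 (Fin.castSucc_lt_last i).ne
    · intro hv
      obtain ⟨m, rfl⟩ := (hmemC v).1 (Finset.mem_of_mem_erase hv)
      have hm : m ≠ last := (hmemerase last m).1 hv
      have hm' : m.1 < r := by
        have := m.isLt
        have : m.1 ≠ r := fun h => hm (Fin.ext h)
        omega
      exact ⟨⟨m.1, hm'⟩, congrArg s (Fin.ext rfl)⟩
  have hlastset : Finset.image (fun i : Fin r => s i.succ) Finset.univ = C.erase (s 0) := by
    ext v
    simp only [Finset.mem_image, Finset.mem_univ, true_and]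
    constructor
    · rintro ⟨i, rfl⟩
      exact (hmemerase 0 i.succ).2 (Fin.succ_ne_zero i)
    · intro hv
      obtain ⟨m, rfl⟩ := (hmemC v).1 (Finset.mem_of_mem_erase hv)
      have hm : m ≠ 0 := (hmemerase 0 m).1 hv
      exact ⟨m.pred hm, congrArg s (Fin.succ_pred m hm)⟩
  have h0last : (0 : Fin (r + 1)) ≠ last := by
    intro h
    have := congrArg Fin.val h
    simp [hlastdef, Fin.last] at this
    omega
  have hne_fl : C.erase (s last) ≠ C.erase (s 0) := by
    intro h
    have h1 : s 0 ∈ C.erase (s last) := (hmemerase last 0).2 h0last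
    rw [h] at h1
    exact ((hmemerase 0 0).1 h1) rfl
  rw [hfirst, hlastset]
  have hiff2 : ((S ≠ C.erase (s last) ∧ S ≠ C.erase (s 0)) ∨ S = C.erase (s 0)) ↔
      S ≠ C.erase (s last) := by
    constructor
    · rintro (⟨h, _⟩ | rfl)
      · exact h
      · exact fun h => hne_fl h.symm
    · intro h
      by_cases h0 : S = C.erase (s 0)
      · exact Or.inr h0
      · exact Or.inl ⟨h, h0⟩
  rw [hiff2]
  have hSiff : S ≠ C.erase (s last) ↔ i₀ ≠ last := by
    rw [hS]
    constructor
    · intro h he; exact h (by rw [he])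
    · intro h he
      have h1 : s last ∈ C.erase (s i₀) := (hmemerase i₀ last).2 (Ne.symm h)
      rw [he] at h1
      exact ((hmemerase last last).1 h1) rfl
  rw [hSiff]
  constructor
  · -- conflict → S unconsecutive-or-last, i.e. i₀ ≠ last; contrapositive
    intro hconf
    by_contra hil
    subst hil
    -- S is the "first r" set; repair σ
    obtain ⟨k, hk⟩ := (hmemC _).1 (hSC (hsel S hScard))
    have hklast : k ≠ last := by
      have hmem : sel S ∈ C.erase (s last) := hS ▸ hsel S hScard
      rw [← hk] at hmem
      exact (hmemerase last k).1 hmem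
    set N := σ (s last) with hN
    let σ' : V → ℕ := fun v => if v = s last then N + 2 else if v = sel S then N + 1 else σ v
    have hval : ∀ m : Fin (r + 1), σ' (s m) =
        if m = last then N + 2 else if m = k then N + 1 else σ (s m) := by
      intro m
      by_cases h1 : m = last
      · simp [σ', h1]
      · by_cases h2 : m = k
        · subst h2
          simp only [σ']
          rw [if_neg (fun h => h1 (sinj h)), if_pos hk, if_neg h1]
          simp
        · simp only [σ']
          rw [if_neg (fun h => h1 (sinj h)),
            if_neg (fun h => h2 (sinj (h.trans hk.symm))), if_neg h1, if_neg h2]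
    exact hconf ⟨σ', by
      -- injectivity on C
      intro u hu v hv h
      obtain ⟨a, rfl⟩ := (hmemC u).1 hu
      obtain ⟨b, rfl⟩ := (hmemC v).1 hv
      rw [hval, hval] at h
      suffices hab : a = b by rw [hab]
      by_cases h1 : a = last <;> by_cases h2 : b = last
      · rw [h1, h2]
      · rw [if_pos h1, if_neg h2] at h
        by_cases h4 : b = k
        · rw [if_pos h4] at h; omega
        · rw [if_neg h4] at h; have := hlt_last b h2; omega
      · rw [if_neg h1, if_pos h2] at h
        by_cases h3 : a = k
        · rw [if_pos h3] at h; omega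
        · rw [if_neg h3] at h; have := hlt_last a h1; omega
      · rw [if_neg h1, if_neg h2] at h
        by_cases h3 : a = k <;> by_cases h4 : b = k
        · rw [h3, h4]
        · rw [if_pos h3, if_neg h4] at h; have := hlt_last b h2; omega
        · rw [if_neg h3, if_pos h4] at h; have := hlt_last a h1; omega
        · rw [if_neg h3, if_neg h4] at h; exact hf.injective h, by
      -- σ' satisfies all constraints
      intro T hTC hTcard
      obtain ⟨j, rfl⟩ := herase T hTC hTcard
      by_cases hj : j = last
      · -- this erasure is S itself
        subst hj
        rw [← hS]
        intro u hu hune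
        obtain ⟨m, rfl⟩ := (hmemC u).1 (hSC hu)
        have hml : m ≠ last := by
          have hmem : s m ∈ C.erase (s last) := hS ▸ hu
          exact (hmemerase last m).1 hmem
        have hmk : m ≠ k := fun h => hune (h ▸ hk)
        rw [← hk, hval, hval, if_neg hml, if_neg hmk, if_neg hklast, if_pos rfl]
        have := hlt_last m hml
        omega
      · -- other constraints: selected vertex is s last
        have hTne : C.erase (s j) ≠ S := by
          rw [hS]
          intro h
          have h1 : s last ∈ C.erase (s j) := (hmemerase j last).2 (Ne.symm hj)
          rw [h] at h1
          exact ((hmemerase last last).1 h1) rfl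
        have hsat : fastSat sel (C.erase (s j)) σ := by
          by_contra h
          exact hTne (huniq _ (Finset.erase_subset _ _) (heracard j) h)
        have hselT := hselsat j hj hsat
        intro u hu hune
        rw [hselT]
        obtain ⟨m, rfl⟩ := (hmemC u).1 (Finset.mem_of_mem_erase hu)
        have hm : m ≠ last := fun h => hune (by rw [h, hselT])
        rw [hval, hval, if_pos rfl, if_neg hm]
        by_cases hmk : m = k
        · rw [if_pos hmk]; omega
        · rw [if_neg hmk]
          have := hlt_last m hm
          omega⟩
  · -- i₀ ≠ last → conflict
    intro hi₀
    rintro ⟨τ, hτinj, hτ⟩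
    obtain ⟨k, hk⟩ := (hmemC _).1 (hSC (hsel S hScard))
    have hklast : k ≠ last := by
      intro h
      subst h
      apply hSbad
      intro u hu hune
      obtain ⟨m, rfl⟩ := (hmemC u).1 (hSC hu)
      rw [← hk] at hune ⊢
      exact hlt_last m (fun h => hune (by rw [h]))
    -- find a spare index j
    have hj : ∃ j : Fin (r + 1), j ≠ i₀ ∧ j ≠ k ∧ j ≠ last := by
      by_contra h
      push_neg at h
      have hsub : (Finset.univ : Finset (Fin (r + 1))) ⊆ {i₀, k, last} := by
        intro j _
        simp only [Finset.mem_insert, Finset.mem_singleton]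
        by_cases h1 : j = i₀
        · exact Or.inl h1
        by_cases h2 : j = k
        · exact Or.inr (Or.inl h2)
        exact Or.inr (Or.inr (h j h1 h2))
      have h1 := Finset.card_le_card hsub
      have h2 : ({i₀, k, last} : Finset (Fin (r + 1))).card ≤ 3 := by
        refine le_trans (Finset.card_insert_le _ _) ?_
        have h3 := Finset.card_insert_le k ({last} : Finset (Fin (r + 1)))
        simp only [Finset.card_singleton] at h3
        omega
      rw [Finset.card_univ, Fintype.card_fin] at h1
      omega
    obtain ⟨j, hji, hjk, hjl⟩ := hj
    have hTne : C.erase (s j) ≠ S := by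
      rw [hS]
      intro h
      have h1 : s i₀ ∈ C.erase (s j) := (hmemerase j i₀).2 (Ne.symm hji)
      rw [h] at h1
      exact ((hmemerase i₀ i₀).1 h1) rfl
    have hsatj : fastSat sel (C.erase (s j)) σ := by
      by_contra h
      exact hTne (huniq _ (Finset.erase_subset _ _) (heracard j) h)
    have hselj := hselsat j hjl hsatj
    have h1 : τ (s k) < τ (s last) := by
      have := hτ (C.erase (s j)) (Finset.erase_subset _ _) (heracard j) (s k)
        ((hmemerase j k).2 (Ne.symm hjk))
        (by rw [hselj]; exact fun h => hklast (sinj h))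
      rwa [hselj] at this
    have h2 : τ (s last) < τ (s k) := by
      have hin : s last ∈ S := hS ▸ (hmemerase i₀ last).2 (Ne.symm hi₀)
      have := hτ S hSC hScard (s last) hin
        (by rw [← hk]; exact fun h => hklast (sinj h).symm)
      rwa [← hk] at this
    omega
end

section
/- In r-Dense Feedback Arc Set, if C = {s₁, …, s_{r+1}} with s₁ <_σ … <_σ s_{r+1} and the only constraint induced by C that is inconsistent with σ is S = {s₁, …, s_r}, then C is not a conflict: the ranking obtained from σ by swapping sel(S) and s_r satisfies all constraints induced by C. -/
/-- If `C = {s₁ <_σ … <_σ s_{r+1}}` and the only constraint induced by `C` inconsistent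
with `σ` is `S = {s₁,…,s_r}`, then `C` is not a conflict: the ranking obtained from `σ`
by swapping `sel S` and `s_r` satisfies all constraints induced by `C`. -/
theorem fast_first_r_not_conflict
    {V : Type*} [DecidableEq V] {r : ℕ} (hr : 3 ≤ r)
    (sel : Finset V → V) (hsel : ∀ S : Finset V, S.card = r → sel S ∈ S)
    (σ : V → ℕ) (s : Fin (r + 1) → V)
    (hmono : ∀ i j : Fin (r + 1), i < j → σ (s i) < σ (s j))
    (C : Finset V) (hC : C = Finset.image s Finset.univ)
    (S : Finset V) (hS : S = Finset.image (fun i : Fin r => s i.castSucc) Finset.univ)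
    (hSbad : ¬ fastSat sel S σ)
    (huniq : ∀ T ⊆ C, T.card = r → ¬ fastSat sel T σ → T = S) :
    (∀ T ⊆ C, T.card = r →
        fastSat sel T (σ ∘ (Equiv.swap (sel S) (s ⟨r - 1, by omega⟩)))) ∧
      ¬ fastConflict r sel C := by
  have hsinj : Function.Injective s := by
    intro i j hij
    rcases lt_trichotomy i j with h | h | h
    · exact absurd (hmono i j h) (by rw [hij]; exact lt_irrefl _)
    · exact h
    · exact absurd (hmono j i h) (by rw [hij]; exact lt_irrefl _)
  have hmemC : ∀ u, u ∈ C ↔ ∃ i, s i = u := by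
    intro u; simp [hC]
  have hmemS : ∀ u, u ∈ S ↔ ∃ i : Fin r, s i.castSucc = u := by
    intro u; simp [hS]
  have hScard : S.card = r := by
    rw [hS, Finset.card_image_of_injective _
      (fun i j hij => Fin.castSucc_injective r (hsinj hij))]
    simp
  have hSsub : S ⊆ C := by
    intro u hu
    obtain ⟨i, hi⟩ := (hmemS u).1 hu
    exact (hmemC u).2 ⟨i.castSucc, hi⟩
  have hselS : sel S ∈ S := hsel S hScard
  obtain ⟨k, hk⟩ := (hmemS _).1 hselS
  -- sel S is not the σ-maximum of S
  have hklt : (k : ℕ) < r - 1 := by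
    by_contra h
    have hkeq : (k.castSucc : Fin (r+1)) = ⟨r - 1, by omega⟩ := by
      apply Fin.ext
      have := k.isLt
      simp only [Fin.coe_castSucc]
      omega
    apply hSbad
    intro u hu hune
    obtain ⟨j, rfl⟩ := (hmemS u).1 hu
    rw [← hk, hkeq]
    have hjne : (j : ℕ) ≠ r - 1 := by
      intro hje
      apply hune
      rw [← hk, hkeq]
      congr 1
      apply Fin.ext
      simp [hje]
    have := j.isLt
    exact hmono j.castSucc ⟨r - 1, by omega⟩
      (by simp only [Fin.lt_def, Fin.coe_castSucc, Fin.val_mk]; omega)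
  have hselne : sel S ≠ s ⟨r - 1, by omega⟩ := by
    rw [← hk]
    intro h
    have := hsinj h
    have : (k.castSucc : Fin (r+1)).val = r - 1 := by rw [this]
    simp only [Fin.coe_castSucc] at this
    omega
  have htopne1 : s ⟨r, by omega⟩ ≠ sel S := by
    rw [← hk]
    intro h
    have := hsinj h
    have h2 : (r : ℕ) = ((k.castSucc : Fin (r+1)) : ℕ) := congrArg Fin.val this
    simp only [Fin.coe_castSucc] at h2
    have := k.isLt
    omega
  have htopne2 : s ⟨r, by omega⟩ ≠ s ⟨r - 1, by omega⟩ := by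
    intro h
    have := hsinj h
    have h2 : (r : ℕ) = r - 1 := congrArg Fin.val this
    omega
  have main : ∀ T ⊆ C, T.card = r →
      fastSat sel T (σ ∘ (Equiv.swap (sel S) (s ⟨r - 1, by omega⟩))) := by
    intro T hT hTcard
    by_cases hsat : fastSat sel T σ
    · -- T contains the top element s ⟨r⟩
      have htopT : s ⟨r, by omega⟩ ∈ T := by
        by_contra htop
        have hTS : T ⊆ S := by
          intro u hu
          obtain ⟨i, rfl⟩ := (hmemC u).1 (hT hu)
          have hir : (i : ℕ) < r := by
            rcases Nat.lt_or_ge (i : ℕ) r with h | h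
            · exact h
            · exfalso
              apply htop
              have hieq : i = ⟨r, by omega⟩ := by
                apply Fin.ext; simp only [Fin.val_mk]; have := i.isLt; omega
              exact congrArg s hieq ▸ hu
          exact (hmemS _).2 ⟨⟨(i : ℕ), hir⟩, congrArg s (Fin.ext rfl)⟩
        have hTeq : T = S := Finset.eq_of_subset_of_card_le hTS (by omega)
        rw [hTeq] at hsat
        exact hSbad hsat
      have hselT : sel T = s ⟨r, by omega⟩ := by
        by_contra hne
        have hlt := hsat _ htopT (fun h => hne h.symm)
        obtain ⟨m, hm⟩ := (hmemC _).1 (hT (hsel T hTcard))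
        rw [← hm] at hlt
        have hmr : (m : ℕ) < r := by
          by_contra hm2
          have hmeq : m = ⟨r, by omega⟩ := by
            apply Fin.ext; simp only [Fin.val_mk]; have := m.isLt; omega
          exact hne (by rw [← hm, hmeq])
        exact lt_asymm hlt (hmono m ⟨r, by omega⟩
          (by simp only [Fin.lt_def, Fin.val_mk]; omega))
      intro u hu hune
      rw [hselT] at hune ⊢
      simp only [Function.comp_apply]
      rw [Equiv.swap_apply_of_ne_of_ne htopne1 htopne2]
      rcases eq_or_ne u (sel S) with rfl | h1
      · rw [Equiv.swap_apply_left]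
        exact hmono ⟨r - 1, by omega⟩ ⟨r, by omega⟩ (by simp only [Fin.mk_lt_mk]; omega)
      rcases eq_or_ne u (s ⟨r - 1, by omega⟩) with rfl | h2
      · rw [Equiv.swap_apply_right, ← hk]
        exact hmono k.castSucc ⟨r, by omega⟩
          (by simp only [Fin.lt_def, Fin.coe_castSucc, Fin.val_mk]; have := k.isLt; omega)
      · rw [Equiv.swap_apply_of_ne_of_ne h1 h2]
        obtain ⟨i, rfl⟩ := (hmemC u).1 (hT hu)
        have hir : (i : ℕ) < r := by
          by_contra h
          refine hune (congrArg s ?_)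
          apply Fin.ext; simp only [Fin.val_mk]; have := i.isLt; omega
        exact hmono i ⟨r, by omega⟩ (by simp only [Fin.lt_def, Fin.val_mk]; omega)
    · have hTeq : T = S := huniq T hT hTcard hsat
      subst hTeq
      intro u hu hune
      simp only [Function.comp_apply]
      rw [Equiv.swap_apply_left]
      rcases eq_or_ne u (s ⟨r - 1, by omega⟩) with rfl | h2
      · rw [Equiv.swap_apply_right, ← hk]
        exact hmono k.castSucc ⟨r - 1, by omega⟩
          (by simp only [Fin.lt_def, Fin.coe_castSucc, Fin.val_mk]; omega)
      · rw [Equiv.swap_apply_of_ne_of_ne hune h2]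
        obtain ⟨j, rfl⟩ := (hmemS u).1 hu
        have hjne : (j : ℕ) ≠ r - 1 := by
          intro hje
          exact h2 (congrArg s (Fin.ext (by simp [hje])))
        exact hmono j.castSucc ⟨r - 1, by omega⟩
          (by simp only [Fin.lt_def, Fin.coe_castSucc, Fin.val_mk]; have := j.isLt; omega)
  refine ⟨main, ?_⟩
  intro hconf
  apply hconf
  refine ⟨σ ∘ (Equiv.swap (sel S) (s ⟨r - 1, by omega⟩)), ?_, main⟩
  have hσC : ∀ a ∈ C, ∀ b ∈ C, σ a = σ b → a = b := by
    intro a ha b hb hab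
    obtain ⟨i, rfl⟩ := (hmemC a).1 ha
    obtain ⟨j, rfl⟩ := (hmemC b).1 hb
    congr 1
    rcases lt_trichotomy i j with h | h | h
    · exact absurd (hmono i j h) (by rw [hab]; exact lt_irrefl _)
    · exact h
    · exact absurd (hmono j i h) (by rw [hab]; exact lt_irrefl _)
  have hswapC : ∀ a ∈ C, Equiv.swap (sel S) (s ⟨r - 1, by omega⟩) a ∈ C := by
    intro a ha
    rcases eq_or_ne a (sel S) with rfl | h1
    · rw [Equiv.swap_apply_left]
      exact (hmemC _).2 ⟨⟨r - 1, by omega⟩, rfl⟩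
    rcases eq_or_ne a (s ⟨r - 1, by omega⟩) with rfl | h2
    · rw [Equiv.swap_apply_right]
      exact hSsub hselS
    · rw [Equiv.swap_apply_of_ne_of_ne h1 h2]
      exact ha
  intro a ha b hb hab
  simp only [Function.comp_apply] at hab
  exact (Equiv.swap (sel S) (s ⟨r - 1, by omega⟩)).injective
    (hσC _ (hswapC a ha) _ (hswapC b hb) hab)
end

section
/- For no l ∈ ℕ is r-Dense Feedback Arc Set l-simply characterized: for every q > r there exists an ordered instance and a set C of q vertices inducing exactly one inconsistent constraint such that C is not a conflict. -/
set_option maxHeartbeats 1000000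


/-- `r`-Dense Feedback Arc Set is not `l`-simply characterized for any `l`: for every
`q > r` there is an ordered instance (on the `q` vertices `Fin q`) and a set `C` of `q`
vertices (here all of them) inducing exactly one inconsistent constraint, such that `C`
is not a conflict. -/
theorem fast_not_simply_characterized (r q : ℕ) (hr : 3 ≤ r) (hq : r < q) :
    ∃ sel : Finset (Fin q) → Fin q,
      (∀ S : Finset (Fin q), S.card = r → sel S ∈ S) ∧
      ∃ σ : Fin q → ℕ, Function.Injective σ ∧
        ∃ S : Finset (Fin q), S.card = r ∧ ¬ fastSat sel S σ ∧
          (∀ T : Finset (Fin q), T.card = r → T ≠ S → fastSat sel T σ) ∧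
          ¬ fastConflict r sel (Finset.univ : Finset (Fin q)) := by
  -- vertices 0 and r-1
  set z : Fin q := ⟨0, by omega⟩ with hz
  set b : Fin q := ⟨r - 1, by omega⟩ with hb
  have hzb : z ≠ b := by
    simp only [hz, hb, Fin.ne_iff_vne]
    omega
  -- the special set S = {0, 1, ..., r-1}
  set S : Finset (Fin q) := Finset.attachFin (Finset.range r)
    (fun m hm => by simp at hm; omega) with hS
  have hmemS : ∀ v : Fin q, v ∈ S ↔ v.val < r := by
    intro v; simp [hS, Finset.mem_attachFin]
  have hScard : S.card = r := by
    simp [hS, Finset.card_attachFin]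
  have hzS : z ∈ S := by rw [hmemS]; simp [hz]; omega
  have hbS : b ∈ S := by rw [hmemS]; simp [hb]; omega
  -- the instance
  set sel : Finset (Fin q) → Fin q := fun T =>
    if T = S then z else if h : T.Nonempty then T.max' h else z with hsel
  have hselS : sel S = z := by simp [hsel]
  have hselT : ∀ (T : Finset (Fin q)) (hne : T.Nonempty), T ≠ S → sel T = T.max' hne := by
    intro T hne hT; simp [hsel, hT, hne]
  refine ⟨sel, ?_, fun v => v.val, fun a c h => Fin.val_injective h, S, hScard, ?_, ?_, ?_⟩
  · -- sel T ∈ T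
    intro T hT
    by_cases h : T = S
    · subst h; rw [hselS]; exact hzS
    · have hne : T.Nonempty := Finset.card_pos.mp (by omega)
      rw [hselT T hne h]; exact T.max'_mem hne
  · -- S not satisfied by σ
    intro hsat
    have := hsat b hbS (fun h => hzb (by rw [hselS] at h; exact h.symm))
    rw [hselS] at this
    simp only [hz, hb] at this
    omega
  · -- all other T satisfied by σ
    intro T hT hTS
    have hne : T.Nonempty := Finset.card_pos.mp (by omega)
    intro u hu hune
    rw [hselT T hne hTS] at hune ⊢
    have hle : u ≤ T.max' hne := T.le_max' u hu
    exact lt_of_le_of_ne hle (fun h => hune (Fin.val_injective h))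
  · -- univ is not a conflict: use swap of z and b
    rw [fastConflict]
    push_neg
    refine ⟨fun v => (Equiv.swap z b v).val, ?_, ?_⟩
    · exact Set.injOn_of_injective (Fin.val_injective.comp (Equiv.swap z b).injective)
    · intro T _ hT
      intro u hu hune
      by_cases h : T = S
      · subst h
        rw [hselS] at hune ⊢
        show (Equiv.swap z b u).val < (Equiv.swap z b z).val
        rw [Equiv.swap_apply_left]
        by_cases hub : u = b
        · subst hub
          rw [Equiv.swap_apply_right]
          simp only [hz, hb]
          omega
        · rw [Equiv.swap_apply_of_ne_of_ne hune hub]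
          have h1 : u.val < r := (hmemS u).mp hu
          have h2 : u.val ≠ r - 1 := fun h => hub (Fin.val_injective (by simp [hb, h]))
          simp only [hb]
          omega
      · have hne : T.Nonempty := Finset.card_pos.mp (by omega)
        rw [hselT T hne h] at hune
        show (Equiv.swap z b u).val < (Equiv.swap z b (sel T)).val
        rw [hselT T hne h]
        set m := T.max' hne with hm
        -- m has value ≥ r, else T = S
        have hmr : r ≤ m.val := by
          by_contra hc
          push_neg at hc
          apply h
          apply Finset.eq_of_subset_of_card_le
          · intro v hv
            rw [hmemS]
            have : v ≤ m := T.le_max' v hv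
            omega
          · omega
        have hmz : m ≠ z := by
          simp only [hz, Fin.ne_iff_vne]; omega
        have hmb : m ≠ b := by
          simp only [hb, Fin.ne_iff_vne]; omega
        rw [Equiv.swap_apply_of_ne_of_ne hmz hmb]
        have hum : u.val < m.val := by
          have hle : u ≤ m := T.le_max' u hu
          exact lt_of_le_of_ne hle (fun hh => hune (Fin.val_injective hh))
        by_cases huz : u = z
        · subst huz
          rw [Equiv.swap_apply_left]
          simp only [hb]
          omega
        · by_cases hub : u = b
          · subst hub
            rw [Equiv.swap_apply_right]
            simp only [hz]
            omega
          · rw [Equiv.swap_apply_of_ne_of_ne huz hub]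
            exact hum
end

section
/- Consider r-Dense Betweenness with r ≥ 4: a constraint S of size r has two selected vertices and is satisfied by a ranking σ iff every non-selected vertex of S lies strictly between the two selected vertices in σ. Let C = {s₁, …, s_{r+1}} with s₁ <_σ … <_σ s_{r+1}, and suppose exactly one induced constraint S is inconsistent with σ. If S is unconsecutive (the missing vertex s_i of C satisfies 1 < i < r+1), then C is a conflict. -/
/-- An instance of `r`-Dense Betweenness: every `r`-subset has two distinct selected
vertices. -/
structure BITSel (V : Type*) (r : ℕ) where
  sel1 : Finset V → V
  sel2 : Finset V → V
  mem1 : ∀ S : Finset V, S.card = r → sel1 S ∈ S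
  mem2 : ∀ S : Finset V, S.card = r → sel2 S ∈ S
  ne : ∀ S : Finset V, S.card = r → sel1 S ≠ sel2 S

/-- A constraint `S` is satisfied by a ranking `σ` iff every non-selected vertex of `S`
lies strictly between the two selected vertices in `σ`. -/
def bitSat {V : Type*} {r : ℕ} (c : BITSel V r) (S : Finset V) (σ : V → ℕ) : Prop :=
  ∀ u ∈ S, u ≠ c.sel1 S → u ≠ c.sel2 S →
    (σ (c.sel1 S) < σ u ∧ σ u < σ (c.sel2 S)) ∨
    (σ (c.sel2 S) < σ u ∧ σ u < σ (c.sel1 S))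

/-- `C` is a conflict for the `r`-BIT instance `c`. -/
def bitConflict {V : Type*} {r : ℕ} (c : BITSel V r) (C : Finset V) : Prop :=
  ¬ ∃ σ : V → ℕ, Set.InjOn σ ↑C ∧ ∀ S ⊆ C, S.card = r → bitSat c S σ

/-- If `u` is a strict extreme of a satisfied constraint, it must be selected. -/
lemma extreme_sel {V : Type*} {r : ℕ} (c : BITSel V r) (T : Finset V)
    (hT : T.card = r) (ρ : V → ℕ) (hsat : bitSat c T ρ) (u : V) (hu : u ∈ T)
    (hext : (∀ x ∈ T, x ≠ u → ρ u < ρ x) ∨ (∀ x ∈ T, x ≠ u → ρ x < ρ u)) :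
    u = c.sel1 T ∨ u = c.sel2 T := by
  by_contra h
  push_neg at h
  rcases hsat u hu h.1 h.2 with ⟨h1, h2⟩ | ⟨h1, h2⟩
  · rcases hext with he | he
    · have := he _ (c.mem1 T hT) (fun e => by rw [e] at h1; exact lt_irrefl _ h1)
      exact lt_asymm h1 this
    · have := he _ (c.mem2 T hT) (fun e => by rw [e] at h2; exact lt_irrefl _ h2)
      exact lt_asymm h2 this
  · rcases hext with he | he
    · have := he _ (c.mem2 T hT) (fun e => by rw [e] at h1; exact lt_irrefl _ h1)
      exact lt_asymm h1 this
    · have := he _ (c.mem1 T hT) (fun e => by rw [e] at h2; exact lt_irrefl _ h2)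
      exact lt_asymm h2 this

/-- If `u` is the strict minimum and `v` the strict maximum of a satisfied constraint,
then `{u, v}` is exactly the selected pair. -/
lemma pair_sel {V : Type*} {r : ℕ} (c : BITSel V r) (T : Finset V)
    (hT : T.card = r) (ρ : V → ℕ) (hsat : bitSat c T ρ) (u v : V)
    (hu : u ∈ T) (hv : v ∈ T) (huv : u ≠ v)
    (hmin : ∀ x ∈ T, x ≠ u → ρ u < ρ x) (hmax : ∀ x ∈ T, x ≠ v → ρ x < ρ v) :
    (c.sel1 T = u ∧ c.sel2 T = v) ∨ (c.sel1 T = v ∧ c.sel2 T = u) := by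
  have h1 := extreme_sel c T hT ρ hsat u hu (Or.inl hmin)
  have h2 := extreme_sel c T hT ρ hsat v hv (Or.inr hmax)
  rcases h1 with h1 | h1 <;> rcases h2 with h2 | h2
  · exact absurd (h1.trans h2.symm) huv
  · exact Or.inl ⟨h1.symm, h2.symm⟩
  · exact Or.inr ⟨h2.symm, h1.symm⟩
  · exact absurd (h1.trans h2.symm) huv

/-- In `r`-BIT (`r ≥ 4`): if `C = {s₁ <_σ … <_σ s_{r+1}}` induces exactly one constraint
`S` inconsistent with `σ`, and `S` is unconsecutive (the missing vertex `s_i` of `C`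
satisfies `1 < i < r+1`), then `C` is a conflict. -/
theorem bit_unconsecutive_conflict
    {V : Type*} [DecidableEq V] {r : ℕ} (hr : 4 ≤ r)
    (c : BITSel V r)
    (σ : V → ℕ) (s : Fin (r + 1) → V)
    (hmono : ∀ i j : Fin (r + 1), i < j → σ (s i) < σ (s j))
    (C : Finset V) (hC : C = Finset.image s Finset.univ)
    (i : Fin (r + 1)) (hi0 : i ≠ 0) (hilast : i ≠ Fin.last r)
    (S : Finset V) (hS : S = C.erase (s i))
    (hSbad : ¬ bitSat c S σ)
    (huniq : ∀ T ⊆ C, T.card = r → ¬ bitSat c T σ → T = S) :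
    bitConflict c C := by
  rintro ⟨τ, hτinj, hτsat⟩
  -- basic facts
  have hinj : Function.Injective s := by
    intro a b hab
    by_contra hne
    rcases lt_or_gt_of_ne hne with h | h
    · have := hmono a b h; rw [hab] at this; exact lt_irrefl _ this
    · have := hmono b a h; rw [hab] at this; exact lt_irrefl _ this
  have hmem : ∀ m, s m ∈ C := fun m => by
    rw [hC]; exact Finset.mem_image_of_mem s (Finset.mem_univ m)
  have hCform : ∀ v ∈ C, ∃ m, s m = v := by
    intro v hv
    rw [hC, Finset.mem_image] at hv
    obtain ⟨m, _, hm⟩ := hv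
    exact ⟨m, hm⟩
  have hsne : ∀ {a b : Fin (r + 1)}, a ≠ b → s a ≠ s b := fun hab e => hab (hinj e)
  have hCcard : C.card = r + 1 := by
    rw [hC, Finset.card_image_of_injective _ hinj, Finset.card_univ, Fintype.card_fin]
  have hTcard : ∀ j : Fin (r + 1), (C.erase (s j)).card = r := by
    intro j
    rw [Finset.card_erase_of_mem (hmem j), hCcard]
    omega
  have h0last : (0 : Fin (r + 1)) ≠ Fin.last r := by
    intro e
    have := congrArg Fin.val e
    rw [Fin.val_last, Fin.val_zero] at this
    omega
  have hmemT : ∀ {m j : Fin (r + 1)}, m ≠ j → s m ∈ C.erase (s j) := by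
    intro m j hmj
    exact Finset.mem_erase.mpr ⟨hsne hmj, hmem m⟩
  have hltlast : ∀ {m : Fin (r + 1)}, m ≠ Fin.last r → m < Fin.last r :=
    fun hm => lt_of_le_of_ne (Fin.le_last _) hm
  -- every induced constraint other than S is satisfied by σ
  have hσsat : ∀ j : Fin (r + 1), j ≠ i → bitSat c (C.erase (s j)) σ := by
    intro j hj
    by_contra hbad
    have heq := huniq (C.erase (s j)) (Finset.erase_subset _ _) (hTcard j) hbad
    rw [hS] at heq
    have h2 : s i ∉ C.erase (s j) := by rw [heq]; exact Finset.notMem_erase _ _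
    exact h2 (hmemT (fun e => hj e.symm))
  -- for interior j ≠ i, the selected pair of `C.erase (s j)` is {s 0, s last}
  have pairσ : ∀ j : Fin (r + 1), j ≠ 0 → j ≠ Fin.last r → j ≠ i →
      (c.sel1 (C.erase (s j)) = s 0 ∧ c.sel2 (C.erase (s j)) = s (Fin.last r)) ∨
      (c.sel1 (C.erase (s j)) = s (Fin.last r) ∧ c.sel2 (C.erase (s j)) = s 0) := by
    intro j hj0 hjl hji
    apply pair_sel c _ (hTcard j) σ (hσsat j hji) _ _ (hmemT (fun e => hj0 e.symm))
      (hmemT (fun e => hjl e.symm)) (hsne h0last)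
    · intro x hx hxne
      obtain ⟨m, rfl⟩ := hCform x (Finset.erase_subset _ _ hx)
      have hm0 : m ≠ 0 := fun e => hxne (congrArg s e)
      exact hmono 0 m (Fin.pos_of_ne_zero hm0)
    · intro x hx hxne
      obtain ⟨m, rfl⟩ := hCform x (Finset.erase_subset _ _ hx)
      have hml : m ≠ Fin.last r := fun e => hxne (congrArg s e)
      exact hmono m (Fin.last r) (hltlast hml)
  -- τ places everything in the erased set strictly between τ(s 0) and τ(s last)
  have hbtw : ∀ j : Fin (r + 1), j ≠ 0 → j ≠ Fin.last r → j ≠ i →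
      ∀ u ∈ C.erase (s j), u ≠ s 0 → u ≠ s (Fin.last r) →
      (τ (s 0) < τ u ∧ τ u < τ (s (Fin.last r))) ∨
      (τ (s (Fin.last r)) < τ u ∧ τ u < τ (s 0)) := by
    intro j hj0 hjl hji u hu hu0 hul
    have hsτ := hτsat (C.erase (s j)) (Finset.erase_subset _ _) (hTcard j)
    rcases pairσ j hj0 hjl hji with ⟨e1, e2⟩ | ⟨e1, e2⟩
    · have := hsτ u hu (by rw [e1]; exact hu0) (by rw [e2]; exact hul)
      rw [e1, e2] at this
      exact this
    · have := hsτ u hu (by rw [e1]; exact hul) (by rw [e2]; exact hu0)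
      rw [e1, e2] at this
      exact this.symm
  -- choose two interior indices distinct from i
  obtain ⟨j₁, j₂, hj₁0, hj₁l, hj₁i, hj₂0, hj₂l, hj₂i, hj₁₂⟩ :
      ∃ j₁ j₂ : Fin (r + 1), j₁ ≠ 0 ∧ j₁ ≠ Fin.last r ∧ j₁ ≠ i ∧
        j₂ ≠ 0 ∧ j₂ ≠ Fin.last r ∧ j₂ ≠ i ∧ j₁ ≠ j₂ := by
    refine ⟨if i = ⟨1, by omega⟩ then ⟨2, by omega⟩ else ⟨1, by omega⟩,
      if i = ⟨3, by omega⟩ then ⟨2, by omega⟩ else ⟨3, by omega⟩, ?_, ?_, ?_, ?_, ?_, ?_, ?_⟩ <;>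
      split_ifs with h1 h2 <;>
      simp_all only [Fin.ext_iff, Fin.val_last, Fin.val_zero, ne_eq] <;> omega
  -- key fact: every interior vertex is strictly τ-between τ(s 0) and τ(s last)
  have K : ∀ m : Fin (r + 1), m ≠ 0 → m ≠ Fin.last r →
      (τ (s 0) < τ (s m) ∧ τ (s m) < τ (s (Fin.last r))) ∨
      (τ (s (Fin.last r)) < τ (s m) ∧ τ (s m) < τ (s 0)) := by
    intro m hm0 hml
    by_cases hmj : m = j₁
    · exact hbtw j₂ hj₂0 hj₂l hj₂i (s m) (hmemT (hmj ▸ hj₁₂)) (hsne hm0) (hsne hml)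
    · exact hbtw j₁ hj₁0 hj₁l hj₁i (s m) (hmemT hmj) (hsne hm0) (hsne hml)
  -- τ(s 0) ≠ τ(s last)
  have hτne : τ (s 0) ≠ τ (s (Fin.last r)) := fun e =>
    hsne h0last (hτinj (Finset.mem_coe.mpr (hmem 0))
      (Finset.mem_coe.mpr (hmem (Fin.last r))) e)
  have hSsub : S ⊆ C := by rw [hS]; exact Finset.erase_subset _ _
  have hScard : S.card = r := by rw [hS]; exact hTcard i
  have hmem0S : s 0 ∈ S := by rw [hS]; exact hmemT (fun e => hi0 e.symm)
  have hmemlS : s (Fin.last r) ∈ S := by rw [hS]; exact hmemT (fun e => hilast e.symm)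
  have hτS : bitSat c S τ := hτsat S hSsub hScard
  -- the selected pair of S must also be {s 0, s last}
  have pairS : (c.sel1 S = s 0 ∧ c.sel2 S = s (Fin.last r)) ∨
      (c.sel1 S = s (Fin.last r) ∧ c.sel2 S = s 0) := by
    rcases lt_or_gt_of_ne hτne with hab | hab
    · apply pair_sel c S hScard τ hτS _ _ hmem0S hmemlS (hsne h0last)
      · intro x hx hxne
        obtain ⟨m, rfl⟩ := hCform x (hSsub hx)
        have hm0 : m ≠ 0 := fun e => hxne (congrArg s e)
        by_cases hml : m = Fin.last r
        · rw [hml]; exact hab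
        · rcases K m hm0 hml with ⟨h1, _⟩ | ⟨h1, h2⟩
          · exact h1
          · exact absurd (h2.trans hab) (not_lt.mpr h1.le)
      · intro x hx hxne
        obtain ⟨m, rfl⟩ := hCform x (hSsub hx)
        have hml : m ≠ Fin.last r := fun e => hxne (congrArg s e)
        by_cases hm0 : m = 0
        · rw [hm0]; exact hab
        · rcases K m hm0 hml with ⟨_, h2⟩ | ⟨h1, h2⟩
          · exact h2
          · exact absurd (h2.trans hab) (not_lt.mpr h1.le)
    · have := pair_sel c S hScard τ hτS _ _ hmemlS hmem0S (hsne (Ne.symm h0last))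
        ?_ ?_
      · tauto
      · intro x hx hxne
        obtain ⟨m, rfl⟩ := hCform x (hSsub hx)
        have hml : m ≠ Fin.last r := fun e => hxne (congrArg s e)
        by_cases hm0 : m = 0
        · rw [hm0]; exact hab
        · rcases K m hm0 hml with ⟨h1, h2⟩ | ⟨h1, _⟩
          · exact absurd (h1.trans h2) (not_lt.mpr hab.le)
          · exact h1
      · intro x hx hxne
        obtain ⟨m, rfl⟩ := hCform x (hSsub hx)
        have hm0 : m ≠ 0 := fun e => hxne (congrArg s e)
        by_cases hml : m = Fin.last r
        · rw [hml]; exact hab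
        · rcases K m hm0 hml with ⟨h1, h2⟩ | ⟨_, h2⟩
          · exact absurd (h1.trans h2) (not_lt.mpr hab.le)
          · exact h2
  -- but then σ would satisfy S, contradiction
  apply hSbad
  intro u hu hu1 hu2
  obtain ⟨m, rfl⟩ := hCform u (hSsub hu)
  rcases pairS with ⟨e1, e2⟩ | ⟨e1, e2⟩
  · have hm0 : m ≠ 0 := fun e => hu1 (by rw [e, e1])
    have hml : m ≠ Fin.last r := fun e => hu2 (by rw [e, e2])
    left
    rw [e1, e2]
    exact ⟨hmono 0 m (Fin.pos_of_ne_zero hm0), hmono m (Fin.last r) (hltlast hml)⟩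
  · have hm0 : m ≠ 0 := fun e => hu2 (by rw [e, e2])
    have hml : m ≠ Fin.last r := fun e => hu1 (by rw [e, e1])
    right
    rw [e1, e2]
    exact ⟨hmono 0 m (Fin.pos_of_ne_zero hm0), hmono m (Fin.last r) (hltlast hml)⟩
end

section
/- The r-Dense Betweenness problem (r ≥ 4) is 2r-simply characterized: for any ordered instance R_σ and any set C of 2r vertices such that the induced instance on C contains exactly one constraint inconsistent with σ, the set C is a conflict. -/
/-- There is an `r`-set `S` with `base ⊆ S ⊆ P` avoiding a given set `S₀`. -/
lemma bit_aux_exists {V : Type*} [DecidableEq V] {r : ℕ} (base P S₀ : Finset V)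
    (hbP : base ⊆ P) (hb : base.card < r) (hP : r + 1 ≤ P.card) :
    ∃ S, base ⊆ S ∧ S ⊆ P ∧ S.card = r ∧ S ≠ S₀ := by
  obtain ⟨S₁, hbS, hSP, hcard⟩ :=
    Finset.exists_subsuperset_card_eq hbP hb.le (le_trans (Nat.le_succ r) hP)
  by_cases h : S₁ = S₀
  · obtain ⟨w, hw⟩ : (P \ S₁).Nonempty := by
      rw [← Finset.card_pos, Finset.card_sdiff_of_subset hSP]; omega
    obtain ⟨w', hw'⟩ : (S₁ \ base).Nonempty := by
      rw [← Finset.card_pos, Finset.card_sdiff_of_subset hbS]; omega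
    rw [Finset.mem_sdiff] at hw hw'
    refine ⟨insert w (S₁.erase w'), ?_, ?_, ?_, ?_⟩
    · intro b hbb
      exact Finset.mem_insert_of_mem (Finset.mem_erase.2
        ⟨fun e => hw'.2 (e ▸ hbb), hbS hbb⟩)
    · intro v hv
      rcases Finset.mem_insert.1 hv with rfl | hv
      · exact hw.1
      · exact hSP (Finset.mem_of_mem_erase hv)
    · rw [Finset.card_insert_of_notMem (fun hc => hw.2 (Finset.mem_of_mem_erase hc)),
        Finset.card_erase_of_mem hw'.1, hcard]
      omega
    · intro e
      exact hw.2 (h ▸ e ▸ Finset.mem_insert_self w _)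
  · exact ⟨S₁, hbS, hSP, hcard, h⟩

/-- If a ranking satisfies a constraint, the selected vertices are exactly the
extremes of the constraint set. -/
lemma bit_sel_eq {V : Type*} {r : ℕ} (c : BITSel V r) (S : Finset V) (hcard : S.card = r)
    (τ : V → ℕ) (hsat : bitSat c S τ) (a b : V) (ha : a ∈ S) (hb : b ∈ S)
    (hmin : ∀ u ∈ S, u ≠ a → τ a < τ u)
    (hmax : ∀ u ∈ S, u ≠ b → τ u < τ b) :
    (c.sel1 S = a ∧ c.sel2 S = b) ∨ (c.sel1 S = b ∧ c.sel2 S = a) := by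
  have h1 := c.mem1 S hcard
  have h2 := c.mem2 S hcard
  have hne := c.ne S hcard
  have hab : a ≠ b := by
    intro e; subst e
    rcases em (c.sel1 S = a) with e1 | e1
    · have e2 : c.sel2 S ≠ a := fun e2 => hne (e1.trans e2.symm)
      exact absurd (hmin _ h2 e2) (not_lt.2 (hmax _ h2 e2).le)
    · exact absurd (hmin _ h1 e1) (not_lt.2 (hmax _ h1 e1).le)
  have hA : c.sel1 S = a ∨ c.sel2 S = a := by
    by_contra hcon
    push_neg at hcon
    rcases hsat a ha (fun e => hcon.1 e.symm) (fun e => hcon.2 e.symm) with h | h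
    · exact absurd h.1 (not_lt.2 (hmin _ h1 (fun e => hcon.1 e)).le)
    · exact absurd h.1 (not_lt.2 (hmin _ h2 (fun e => hcon.2 e)).le)
  have hB : c.sel1 S = b ∨ c.sel2 S = b := by
    by_contra hcon
    push_neg at hcon
    rcases hsat b hb (fun e => hcon.1 e.symm) (fun e => hcon.2 e.symm) with h | h
    · exact absurd h.2 (not_lt.2 (hmax _ h2 (fun e => hcon.2 e)).le)
    · exact absurd h.2 (not_lt.2 (hmax _ h1 (fun e => hcon.1 e)).le)
  rcases hA with hA | hA <;> rcases hB with hB | hB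
  · exact absurd (hA ▸ hB : a = b).symm hab.symm
  · exact Or.inl ⟨hA, hB⟩
  · exact Or.inr ⟨hB, hA⟩
  · exact absurd (hA ▸ hB : a = b).symm hab.symm

lemma bit_main_false {V : Type*} [DecidableEq V] {r : ℕ} (hr : 4 ≤ r)
    (c : BITSel V r) (σ : V → ℕ) (hσ : Function.Injective σ)
    (C : Finset V) (hC : C.card = 2 * r)
    (S₀ : Finset V) (hS₀C : S₀ ⊆ C) (hS₀card : S₀.card = r)
    (hS₀bad : ¬ bitSat c S₀ σ)
    (hothers : ∀ S, S ⊆ C → S.card = r → S ≠ S₀ → bitSat c S σ)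
    (π : V → ℕ) (hπinj : Set.InjOn π ↑C)
    (hπ : ∀ S ⊆ C, S.card = r → bitSat c S π)
    (m M : V) (hm : m ∈ C) (hM : M ∈ C)
    (hmσ : ∀ z ∈ C, σ m ≤ σ z) (hMσ : ∀ z ∈ C, σ z ≤ σ M)
    (hmM : π m < π M) : False := by
  have hmMne : m ≠ M := fun e => absurd (e ▸ hmM) (lt_irrefl _)
  -- strict σ-min/max over C
  have hmσ' : ∀ z ∈ C, z ≠ m → σ m < σ z := fun z hz hzm =>
    lt_of_le_of_ne (hmσ z hz) (fun e => hzm (hσ e.symm))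
  have hMσ' : ∀ z ∈ C, z ≠ M → σ z < σ M := fun z hz hzM =>
    lt_of_le_of_ne (hMσ z hz) (fun e => hzM (hσ e))
  -- Step 1: m and M are the global π-extremes of C
  have hbound : ∀ z ∈ C, π m ≤ π z ∧ π z ≤ π M := by
    intro z hz
    by_cases hzm : z = m
    · exact ⟨hzm ▸ le_refl _, hzm ▸ hmM.le⟩
    by_cases hzM : z = M
    · exact ⟨hzM ▸ hmM.le, hzM ▸ le_refl _⟩
    have hbase : insert m (insert M {z}) ⊆ C := by
      intro v hv
      simp only [Finset.mem_insert, Finset.mem_singleton] at hv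
      rcases hv with rfl | rfl | rfl <;> assumption
    have hbcard : (insert m (insert M ({z} : Finset V))).card < r := by
      calc (insert m (insert M ({z} : Finset V))).card
          ≤ (insert M ({z} : Finset V)).card + 1 := Finset.card_insert_le _ _
        _ ≤ ({z} : Finset V).card + 1 + 1 := by
            exact Nat.add_le_add_right (Finset.card_insert_le _ _) 1
        _ = 3 := by simp
        _ < r := by omega
    obtain ⟨S, hbS, hSC, hScard, hSne⟩ :=
      bit_aux_exists (insert m (insert M {z})) C S₀ hbase hbcard (by omega)
    have hmS : m ∈ S := hbS (Finset.mem_insert_self _ _)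
    have hMS : M ∈ S := hbS (Finset.mem_insert_of_mem (Finset.mem_insert_self _ _))
    have hzS : z ∈ S := hbS (Finset.mem_insert_of_mem (Finset.mem_insert_of_mem
      (Finset.mem_singleton_self _)))
    have hsatσ := hothers S hSC hScard hSne
    have hsel := bit_sel_eq c S hScard σ hsatσ m M hmS hMS
      (fun u hu hum => hmσ' u (hSC hu) hum)
      (fun u hu huM => hMσ' u (hSC hu) huM)
    have hsatπ := hπ S hSC hScard
    rcases hsel with ⟨e1, e2⟩ | ⟨e1, e2⟩
    · have := hsatπ z hzS (fun e => hzm (e.trans e1)) (fun e => hzM (e.trans e2))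
      rw [e1, e2] at this
      omega
    · have := hsatπ z hzS (fun e => hzM (e.trans e1)) (fun e => hzm (e.trans e2))
      rw [e1, e2] at this
      omega
  -- Step 2: π is monotone w.r.t. σ on C
  have mono : ∀ x ∈ C, ∀ y ∈ C, σ x < σ y → π x < π y := by
    intro x hx y hy hxy
    have hxyne : x ≠ y := fun e => absurd (e ▸ hxy) (lt_irrefl _)
    set P₁ := C.filter (fun z => σ z ≤ σ y) with hP₁
    set P₂ := C.filter (fun z => σ x ≤ σ z) with hP₂
    have hcases : r + 1 ≤ P₁.card ∨ r + 1 ≤ P₂.card := by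
      have hcup : P₁ ∪ P₂ = C := by
        apply Finset.Subset.antisymm
        · exact Finset.union_subset (Finset.filter_subset _ _) (Finset.filter_subset _ _)
        · intro z hz
          rcases le_or_gt (σ z) (σ y) with h | h
          · exact Finset.mem_union_left _ (Finset.mem_filter.2 ⟨hz, h⟩)
          · exact Finset.mem_union_right _ (Finset.mem_filter.2 ⟨hz, (hxy.trans h).le⟩)
      have hsub : ({x, y} : Finset V) ⊆ P₁ ∩ P₂ := by
        intro v hv
        rcases Finset.mem_insert.1 hv with rfl | hv
        · exact Finset.mem_inter.2 ⟨Finset.mem_filter.2 ⟨hx, hxy.le⟩,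
            Finset.mem_filter.2 ⟨hx, le_refl _⟩⟩
        · rw [Finset.mem_singleton] at hv; subst hv
          exact Finset.mem_inter.2 ⟨Finset.mem_filter.2 ⟨hy, le_refl _⟩,
            Finset.mem_filter.2 ⟨hy, hxy.le⟩⟩
      have h2 : 2 ≤ (P₁ ∩ P₂).card := by
        have := Finset.card_le_card hsub
        rwa [Finset.card_insert_of_notMem (by simpa using hxyne),
          Finset.card_singleton] at this
      have := Finset.card_union_add_card_inter P₁ P₂
      rw [hcup, hC] at this
      omega
    rcases hcases with hcase | hcase
    · -- use subsets with max y containing m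
      have hbase : insert m (insert x {y}) ⊆ P₁ := by
        intro v hv
        simp only [Finset.mem_insert, Finset.mem_singleton] at hv
        rcases hv with rfl | rfl | rfl
        · exact Finset.mem_filter.2 ⟨hm, (hmσ x hx).trans hxy.le⟩
        · exact Finset.mem_filter.2 ⟨hx, hxy.le⟩
        · exact Finset.mem_filter.2 ⟨hy, le_refl _⟩
      have hbcard : (insert m (insert x ({y} : Finset V))).card < r := by
        calc (insert m (insert x ({y} : Finset V))).card
            ≤ (insert x ({y} : Finset V)).card + 1 := Finset.card_insert_le _ _
          _ ≤ ({y} : Finset V).card + 1 + 1 :=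
              Nat.add_le_add_right (Finset.card_insert_le _ _) 1
          _ = 3 := by simp
          _ < r := by omega
      obtain ⟨S, hbS, hSP, hScard, hSne⟩ :=
        bit_aux_exists (insert m (insert x {y})) P₁ S₀ hbase hbcard hcase
      have hSC : S ⊆ C := hSP.trans (Finset.filter_subset _ _)
      have hmS : m ∈ S := hbS (Finset.mem_insert_self _ _)
      have hxS : x ∈ S := hbS (Finset.mem_insert_of_mem (Finset.mem_insert_self _ _))
      have hyS : y ∈ S := hbS (Finset.mem_insert_of_mem (Finset.mem_insert_of_mem
        (Finset.mem_singleton_self _)))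
      have hmy : m ≠ y := fun e =>
        absurd ((hmσ x hx).trans_lt hxy) (e ▸ lt_irrefl _)
      have hymax : ∀ u ∈ S, u ≠ y → σ u < σ y := by
        intro u hu huy
        have := (Finset.mem_filter.1 (hSP hu)).2
        exact lt_of_le_of_ne this (fun e => huy (hσ e))
      have hsatσ := hothers S hSC hScard hSne
      have hsel := bit_sel_eq c S hScard σ hsatσ m y hmS hyS
        (fun u hu hum => hmσ' u (hSC hu) hum) hymax
      have hsatπ := hπ S hSC hScard
      by_cases hxm : x = m
      · subst hxm
        exact lt_of_le_of_ne (hbound y hy).1 (fun e => hmy (hπinj hx hy e))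
      · have hπmx := (hbound x hx).1
        rcases hsel with ⟨e1, e2⟩ | ⟨e1, e2⟩
        · have := hsatπ x hxS (fun e => hxm (e.trans e1)) (fun e => hxyne (e.trans e2))
          rw [e1, e2] at this
          have hπmx' : π m < π x := lt_of_le_of_ne hπmx (fun e => hxm (hπinj hx hm e.symm))
          omega
        · have := hsatπ x hxS (fun e => hxyne (e.trans e1)) (fun e => hxm (e.trans e2))
          rw [e1, e2] at this
          have hπmx' : π m < π x := lt_of_le_of_ne hπmx (fun e => hxm (hπinj hx hm e.symm))
          omega
    · -- use subsets with min x containing M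
      have hbase : insert x (insert y {M}) ⊆ P₂ := by
        intro v hv
        simp only [Finset.mem_insert, Finset.mem_singleton] at hv
        rcases hv with rfl | rfl | rfl
        · exact Finset.mem_filter.2 ⟨hx, le_refl _⟩
        · exact Finset.mem_filter.2 ⟨hy, hxy.le⟩
        · exact Finset.mem_filter.2 ⟨hM, hxy.le.trans (hMσ y hy)⟩
      have hbcard : (insert x (insert y ({M} : Finset V))).card < r := by
        calc (insert x (insert y ({M} : Finset V))).card
            ≤ (insert y ({M} : Finset V)).card + 1 := Finset.card_insert_le _ _
          _ ≤ ({M} : Finset V).card + 1 + 1 :=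
              Nat.add_le_add_right (Finset.card_insert_le _ _) 1
          _ = 3 := by simp
          _ < r := by omega
      obtain ⟨S, hbS, hSP, hScard, hSne⟩ :=
        bit_aux_exists (insert x (insert y {M})) P₂ S₀ hbase hbcard hcase
      have hSC : S ⊆ C := hSP.trans (Finset.filter_subset _ _)
      have hxS : x ∈ S := hbS (Finset.mem_insert_self _ _)
      have hyS : y ∈ S := hbS (Finset.mem_insert_of_mem (Finset.mem_insert_self _ _))
      have hMS : M ∈ S := hbS (Finset.mem_insert_of_mem (Finset.mem_insert_of_mem
        (Finset.mem_singleton_self _)))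
      have hxM : x ≠ M := fun e =>
        absurd (hxy.trans_le (hMσ y hy)) (e ▸ lt_irrefl _)
      have hxmin : ∀ u ∈ S, u ≠ x → σ x < σ u := by
        intro u hu hux
        have := (Finset.mem_filter.1 (hSP hu)).2
        exact lt_of_le_of_ne this (fun e => hux (hσ e.symm))
      have hsatσ := hothers S hSC hScard hSne
      have hsel := bit_sel_eq c S hScard σ hsatσ x M hxS hMS hxmin
        (fun u hu huM => hMσ' u (hSC hu) huM)
      have hsatπ := hπ S hSC hScard
      by_cases hyM : y = M
      · subst hyM
        exact lt_of_le_of_ne (hbound x hx).2 (fun e => hxM (hπinj hx hy e))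
      · have hπyM := (hbound y hy).2
        rcases hsel with ⟨e1, e2⟩ | ⟨e1, e2⟩
        · have := hsatπ y hyS (fun e => hxyne (e.trans e1).symm) (fun e => hyM (e.trans e2))
          rw [e1, e2] at this
          have hπyM' : π y < π M := lt_of_le_of_ne hπyM (fun e => hyM (hπinj hy hM e))
          omega
        · have := hsatπ y hyS (fun e => hyM (e.trans e1)) (fun e => hxyne (e.trans e2).symm)
          rw [e1, e2] at this
          have hπyM' : π y < π M := lt_of_le_of_ne hπyM (fun e => hyM (hπinj hy hM e))
          omega
  -- Step 3: transfer satisfaction of S₀ from π back to σ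
  have rev : ∀ a ∈ C, ∀ b ∈ C, π a < π b → σ a < σ b := by
    intro a ha b hb hab
    rcases lt_trichotomy (σ a) (σ b) with h | h | h
    · exact h
    · exact absurd (congrArg π (hσ h)) (fun e => absurd (e ▸ hab) (lt_irrefl _))
    · exact absurd (mono b hb a ha h) (fun e => absurd (hab.trans e) (lt_irrefl _))
  apply hS₀bad
  intro u hu h1 h2
  have hs1 : c.sel1 S₀ ∈ C := hS₀C (c.mem1 S₀ hS₀card)
  have hs2 : c.sel2 S₀ ∈ C := hS₀C (c.mem2 S₀ hS₀card)
  have huC : u ∈ C := hS₀C hu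
  rcases hπ S₀ hS₀C hS₀card u hu h1 h2 with ⟨ha, hb⟩ | ⟨ha, hb⟩
  · exact Or.inl ⟨rev _ hs1 _ huC ha, rev _ huC _ hs2 hb⟩
  · exact Or.inr ⟨rev _ hs2 _ huC ha, rev _ huC _ hs1 hb⟩

/-- `r`-Dense Betweenness (`r ≥ 4`) is `2r`-simply characterized: for any ordered
instance and any set `C` of `2r` vertices inducing exactly one constraint inconsistent
with the ranking `σ`, the set `C` is a conflict. -/
theorem bit_2r_simply_characterized
    {V : Type*} [DecidableEq V] {r : ℕ} (hr : 4 ≤ r)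
    (c : BITSel V r)
    (σ : V → ℕ) (hσ : Function.Injective σ)
    (C : Finset V) (hC : C.card = 2 * r)
    (huniq : ∃! S : Finset V, S ⊆ C ∧ S.card = r ∧ ¬ bitSat c S σ) :
    bitConflict c C := by
  obtain ⟨S₀, ⟨hS₀C, hS₀card, hS₀bad⟩, huniq'⟩ := huniq
  rintro ⟨π, hπinj, hπ⟩
  have hothers : ∀ S, S ⊆ C → S.card = r → S ≠ S₀ → bitSat c S σ := by
    intro S hSC hScard hSne
    by_contra hcon
    exact hSne (huniq' S ⟨hSC, hScard, hcon⟩)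
  have hCne : C.Nonempty := by
    rw [← Finset.card_pos, hC]; omega
  obtain ⟨m, hm, hmσ⟩ := C.exists_min_image σ hCne
  obtain ⟨M, hM, hMσ⟩ := C.exists_max_image σ hCne
  have hmMne : m ≠ M := by
    obtain ⟨a, ha, b, hb, hab⟩ := Finset.one_lt_card.mp (by rw [hC]; omega)
    intro e
    have h1 : σ m ≤ σ a := hmσ a ha
    have h2 : σ a ≤ σ M := hMσ a ha
    have h3 : σ m ≤ σ b := hmσ b hb
    have h4 : σ b ≤ σ M := hMσ b hb
    rw [e] at h1 h3
    exact hab (hσ (by omega))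
  have hπne : π m ≠ π M := fun e => hmMne (hπinj hm hM e)
  rcases hπne.lt_or_gt with hlt | hlt
  · exact bit_main_false hr c σ hσ C hC S₀ hS₀C hS₀card hS₀bad hothers
      π hπinj hπ m M hm hM hmσ hMσ hlt
  · -- flip π
    set K := C.sup π with hK
    have hle : ∀ v ∈ C, π v ≤ K := fun v hv => Finset.le_sup hv
    have hπinj' : Set.InjOn (fun v => K - π v) ↑C := by
      intro a ha b hb hab
      simp only at hab
      have h1 := hle a ha
      have h2 := hle b hb
      exact hπinj ha hb (by omega)
    have hπ' : ∀ S ⊆ C, S.card = r → bitSat c S (fun v => K - π v) := by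
      intro S hSC hScard u hu h1 h2
      have := hπ S hSC hScard u hu h1 h2
      have b1 := hle _ (hSC (c.mem1 S hScard))
      have b2 := hle _ (hSC (c.mem2 S hScard))
      have b3 := hle u (hSC hu)
      simp only
      omega
    have hlt' : (fun v => K - π v) m < (fun v => K - π v) M := by
      simp only
      have := hle m hm
      omega
    exact bit_main_false hr c σ hσ C hC S₀ hS₀C hS₀card hS₀bad hothers
      (fun v => K - π v) hπinj' hπ' m M hm hM hmσ hMσ hlt'
end

section
/- In r-Dense Feedback Arc Set, removing a vertex v that is the selected vertex of every constraint containing it, together with all constraints containing v, is a safe reduction: the original instance has an edition of size at most k if and only if the reduced instance does. -/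
/-- The `r`-FAST instance induced on the vertex set `W` has an edition of size at most
`k`: one can change the selected vertices of at most `k` constraints of `W` so that some
ranking of `W` satisfies all constraints induced by `W`. -/
def fastEditionLe {V : Type*} [DecidableEq V] (r : ℕ) (sel : Finset V → V)
    (W : Finset V) (k : ℕ) : Prop :=
  ∃ F : Finset (Finset V), F.card ≤ k ∧ (∀ S ∈ F, S ⊆ W ∧ S.card = r) ∧
    ∃ sel' : Finset V → V, (∀ S : Finset V, S ∉ F → sel' S = sel S) ∧
      (∀ S ⊆ W, S.card = r → sel' S ∈ S) ∧
      ∃ σ : V → ℕ, Set.InjOn σ ↑W ∧ ∀ S ⊆ W, S.card = r → fastSat sel' S σ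

/-- Removing a vertex `v` that is the selected vertex of every constraint containing it
(together with all constraints containing `v`) is a safe reduction: the original instance
has an edition of size at most `k` iff the reduced one does. -/
theorem fast_remove_always_selected_vertex
    {V : Type*} [Fintype V] [DecidableEq V] {r : ℕ} (hr : 2 ≤ r)
    (sel : Finset V → V) (hsel : ∀ S : Finset V, S.card = r → sel S ∈ S)
    (v : V) (hv : ∀ S : Finset V, S.card = r → v ∈ S → sel S = v)
    (k : ℕ) :
    fastEditionLe r sel (Finset.univ : Finset V) k ↔
      fastEditionLe r sel (Finset.univ.erase v) k := by
  constructor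
  · rintro ⟨F, hFk, hFW, sel', hsel'out, hsel'mem, σ, hinj, hsat⟩
    classical
    refine ⟨F.filter (fun S => v ∉ S), le_trans (Finset.card_filter_le _ _) hFk, ?_,
      fun S => if S ∈ F.filter (fun S => v ∉ S) then sel' S else sel S, ?_, ?_, σ,
      hinj.mono (by intro x hx; simp), ?_⟩
    · intro S hS
      rw [Finset.mem_filter] at hS
      exact ⟨fun x hx => Finset.mem_erase.2 ⟨fun h => hS.2 (h ▸ hx), Finset.mem_univ x⟩,
        (hFW S hS.1).2⟩
    · intro S hS; simp [hS]
    · intro S hSW hSr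
      by_cases h : S ∈ F.filter (fun S => v ∉ S)
      · simp only [h, if_true]
        exact hsel'mem S (Finset.subset_univ S) hSr
      · simp only [h, if_false]
        exact hsel S hSr
    · intro S hSW hSr
      have hvS : v ∉ S := fun h => (Finset.mem_erase.1 (hSW h)).1 rfl
      have hsel'eq : (if S ∈ F.filter (fun S => v ∉ S) then sel' S else sel S) = sel' S := by
        by_cases h : S ∈ F
        · simp [Finset.mem_filter, h, hvS]
        · simp [Finset.mem_filter, h, hsel'out S h]
      intro u hu hne
      simp only at hne ⊢
      rw [hsel'eq] at hne ⊢
      exact hsat S (Finset.subset_univ S) hSr u hu hne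
  · rintro ⟨F, hFk, hFW, sel', hsel'out, hsel'mem, σ, hinj, hsat⟩
    classical
    let M : ℕ := (Finset.univ.erase v).sup σ + 1
    let σ' : V → ℕ := fun x => if x = v then M else σ x
    have hv' : σ' v = M := if_pos rfl
    have heq : ∀ u : V, u ≠ v → σ' u = σ u := fun u hu => if_neg hu
    have hlt : ∀ u : V, u ≠ v → σ' u < M := by
      intro u hu
      have : σ u ≤ (Finset.univ.erase v).sup σ :=
        Finset.le_sup (Finset.mem_erase.2 ⟨hu, Finset.mem_univ u⟩)
      rw [heq u hu]
      omega
    refine ⟨F, hFk, fun S hS => ⟨(hFW S hS).1.trans (Finset.subset_univ _), (hFW S hS).2⟩,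
      sel', hsel'out, ?_, σ', ?_, ?_⟩
    · intro S _ hSr
      by_cases h : S ∈ F
      · exact hsel'mem S (hFW S h).1 hSr
      · rw [hsel'out S h]; exact hsel S hSr
    · intro x _ y _ hxy
      by_cases hx : x = v <;> by_cases hy : y = v
      · rw [hx, hy]
      · exact absurd hxy (by have := hlt y hy; rw [hx, hv']; omega)
      · exact absurd hxy (by have := hlt x hx; rw [hy, hv']; omega)
      · have : σ x = σ y := by rw [← heq x hx, ← heq y hy]; exact hxy
        exact hinj (Finset.mem_coe.2 (Finset.mem_erase.2 ⟨hx, Finset.mem_univ x⟩))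
          (Finset.mem_coe.2 (Finset.mem_erase.2 ⟨hy, Finset.mem_univ y⟩)) this
    · intro S _ hSr
      by_cases hvS : v ∈ S
      · have hF : S ∉ F := fun h => (Finset.mem_erase.1 ((hFW S h).1 hvS)).1 rfl
        have hsv : sel' S = v := by rw [hsel'out S hF]; exact hv S hSr hvS
        intro u hu hne
        rw [hsv] at hne ⊢
        rw [hv']
        exact hlt u hne
      · have hSW : S ⊆ Finset.univ.erase v := fun x hx =>
          Finset.mem_erase.2 ⟨fun h => hvS (h ▸ hx), Finset.mem_univ x⟩
        intro u hu hne
        have h1 : u ≠ v := fun h => hvS (h ▸ hu)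
        have h2 : sel' S ≠ v := fun h => hvS (h ▸ hsel'mem S hSW hSr)
        rw [heq u h1, heq _ h2]
        exact hsat S hSW hSr u hu hne
end

section
/- Let R_σ be an ordered instance of r-Dense Feedback Arc Set with at most p ≥ 1 inconsistent constraints, and let S be an inconsistent constraint with |span⁻(S)| > p + k + r. Then S is the center of a simple sunflower {C₁, …, C_m} with m > k; i.e., there are more than k vertices v ∈ span⁻(S) \ S such that S ∪ {v} induces exactly one inconsistent constraint (namely S), and each such S ∪ {v} is a conflict. -/
/-- An `(r+1)`-set `insert v S` all of whose `r`-subsets except `S` are satisfied by `σ`,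
where `S` is inconsistent and `v ∈ span⁻(S) \ S`, is a conflict. -/
lemma fast_good_is_conflict {V : Type*} [DecidableEq V] {r : ℕ} (hr : 3 ≤ r)
    (sel : Finset V → V) (hsel : ∀ S : Finset V, S.card = r → sel S ∈ S)
    (σ : V → ℕ) (hσ : Function.Injective σ)
    (S : Finset V) (hS : S.card = r) (hSbad : ¬ fastSat sel S σ)
    (v : V) (hv : v ∉ S) (hvspan : ∃ u ∈ S, σ v ≤ σ u)
    (hgood : ∀ T ⊆ insert v S, T.card = r → T ≠ S → fastSat sel T σ) :
    fastConflict r sel (insert v S) := by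
  rintro ⟨τ, hτinj, hτ⟩
  set C := insert v S with hC
  have hCcard : C.card = r + 1 := by rw [hC, Finset.card_insert_of_notMem hv, hS]
  have hSne : S.Nonempty := Finset.card_pos.mp (by omega)
  obtain ⟨m, hmS, hm⟩ := S.exists_max_image σ hSne
  have hmC : m ∈ C := Finset.mem_insert_of_mem hmS
  have hvm : σ v < σ m := by
    obtain ⟨u, huS, hle⟩ := hvspan
    have h1 : σ v ≤ σ m := le_trans hle (hm u huS)
    have h2 : σ v ≠ σ m := fun h => hv (hσ h ▸ hmS)
    omega
  -- the selected vertex of `S` is not its `σ`-maximum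
  have hselS : sel S ≠ m := by
    intro h
    apply hSbad
    intro u huS hune
    have h1 : σ u ≠ σ (sel S) := fun he => hune (hσ he)
    have h2 := hm u huS
    rw [h]
    rw [h] at h1
    omega
  -- every `r`-subset of `C` other than `S` has `m` as its selected vertex
  have key : ∀ x ∈ C, x ≠ v → x ≠ m → sel (C.erase x) = m := by
    intro x hxC hxv hxm
    have hsub : C.erase x ⊆ C := Finset.erase_subset x C
    have hcard : (C.erase x).card = r := by
      rw [Finset.card_erase_of_mem hxC, hCcard]; omega
    have hne : C.erase x ≠ S := by
      intro h
      have hvxm : v ∈ C.erase x :=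
        Finset.mem_erase.mpr ⟨Ne.symm hxv, Finset.mem_insert_self v S⟩
      rw [h] at hvxm; exact hv hvxm
    have hsat := hgood _ hsub hcard hne
    have hselmem := hsel _ hcard
    by_contra hne2
    have hmmem : m ∈ C.erase x := Finset.mem_erase.mpr ⟨Ne.symm hxm, hmC⟩
    have h1 := hsat m hmmem (Ne.symm hne2)
    have h2 : sel (C.erase x) ∈ C := hsub hselmem
    rcases Finset.mem_insert.mp h2 with h | h
    · rw [h] at h1; omega
    · have := hm _ h; omega
  -- `τ`-maximum of `C`
  obtain ⟨w, hwC, hw⟩ := C.exists_max_image τ ⟨v, Finset.mem_insert_self v S⟩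
  by_cases hwm : w = m
  · -- then `τ` forces `sel S = m`, contradiction
    have hsatS : fastSat sel S τ := hτ S (Finset.subset_insert v S) hS
    have hselSm := hsel S hS
    have h1 := hsatS m hmS (Ne.symm hselS)
    have h2 : τ (sel S) ≤ τ w := hw _ (Finset.mem_insert_of_mem hselSm)
    rw [hwm] at h2
    omega
  · -- pick `x ∈ C` distinct from `v`, `m`, `w`
    have hex : ∃ x ∈ C, x ≠ v ∧ x ≠ m ∧ x ≠ w := by
      by_contra hcon
      push_neg at hcon
      have hsub2 : C ⊆ {v, m, w} := by
        intro x hx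
        rcases eq_or_ne x v with h | h
        · simp [h]
        rcases eq_or_ne x m with h2 | h2
        · simp [h2]
        have := hcon x hx h h2
        simp [this]
      have hle := Finset.card_le_card hsub2
      have h3 : ({v, m, w} : Finset V).card ≤ 3 := by
        calc ({v, m, w} : Finset V).card ≤ ({m, w} : Finset V).card + 1 :=
              Finset.card_insert_le _ _
          _ ≤ (({w} : Finset V).card + 1) + 1 := by
              exact Nat.add_le_add_right (Finset.card_insert_le _ _) 1
          _ = 3 := by simp
      omega
    obtain ⟨x, hxC, hxv, hxm, hxw⟩ := hex
    have hsel_m := key x hxC hxv hxm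
    have hsub : C.erase x ⊆ C := Finset.erase_subset x C
    have hcard : (C.erase x).card = r := by
      rw [Finset.card_erase_of_mem hxC, hCcard]; omega
    have hsatτ := hτ _ hsub hcard
    have hwmem : w ∈ C.erase x := Finset.mem_erase.mpr ⟨fun h => hxw h.symm, hwC⟩
    have h1 := hsatτ w hwmem (by rw [hsel_m]; exact hwm)
    rw [hsel_m] at h1
    have h2 := hw m hmC
    omega

set_option maxHeartbeats 2000000 in
/-- If an ordered `r`-FAST instance has at most `p ≥ 1` inconsistent constraints and `S`
is an inconsistent constraint with `|span⁻(S)| > p + k + r` (where `span⁻(S)` consists of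
the vertices not after the `σ`-maximum of `S`), then `S` is the center of a simple
sunflower of size `> k`: there are more than `k` vertices `v ∈ span⁻(S) \ S` such that
`S ∪ {v}` induces exactly one inconsistent constraint (namely `S`), and each such
`S ∪ {v}` is a conflict. -/
theorem fast_simple_sunflower_exists
    {V : Type*} [Fintype V] [DecidableEq V] {r k p : ℕ} (hr : 3 ≤ r)
    (sel : Finset V → V) (hsel : ∀ S : Finset V, S.card = r → sel S ∈ S)
    (σ : V → ℕ) (hσ : Function.Injective σ)
    (hp1 : 1 ≤ p)
    (hple : {S : Finset V | S.card = r ∧ ¬ fastSat sel S σ}.ncard ≤ p)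
    (S : Finset V) (hS : S.card = r) (hSbad : ¬ fastSat sel S σ)
    (hspan : p + k + r < {v : V | ∃ u ∈ S, σ v ≤ σ u}.ncard) :
    ∃ T : Finset V, k < T.card ∧
      (∀ v ∈ T, v ∉ S ∧ ∃ u ∈ S, σ v ≤ σ u) ∧
      (∀ v ∈ T, ∃! T' : Finset V, T' ⊆ insert v S ∧ T'.card = r ∧ ¬ fastSat sel T' σ) ∧
      (∀ v ∈ T, fastConflict r sel (insert v S)) := by
  classical
  -- Finset versions of the two sets
  set spanF : Finset V := Finset.univ.filter (fun v => ∃ u ∈ S, σ v ≤ σ u) with hspanFdef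
  have hspanF : p + k + r < spanF.card := by
    have : {v : V | ∃ u ∈ S, σ v ≤ σ u}.ncard = spanF.card := by
      rw [Set.ncard_eq_toFinset_card', Set.toFinset_setOf]
    omega
  set I : Finset (Finset V) :=
    Finset.univ.filter (fun T : Finset V => T.card = r ∧ ¬ fastSat sel T σ) with hIdef
  have hI : I.card ≤ p := by
    have : {T : Finset V | T.card = r ∧ ¬ fastSat sel T σ}.ncard = I.card := by
      rw [Set.ncard_eq_toFinset_card', Set.toFinset_setOf]
    omega
  have hSI : S ∈ I := by simp [hIdef, hS, hSbad]
  have hSsub : S ⊆ spanF := by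
    intro u hu
    simp only [hspanFdef, Finset.mem_filter, Finset.mem_univ, true_and]
    exact ⟨u, hu, le_refl _⟩
  -- the "bad" vertices
  set B : Finset V := (spanF \ S).filter
    (fun v => ∃ T' ⊆ insert v S, T'.card = r ∧ T' ≠ S ∧ ¬ fastSat sel T' σ) with hBdef
  -- map each bad vertex to an inconsistent constraint other than `S`
  have hBcard : B.card ≤ (I.erase S).card := by
    set f : V → Finset V := fun v =>
      if h : ∃ T' ⊆ insert v S, T'.card = r ∧ T' ≠ S ∧ ¬ fastSat sel T' σ
      then h.choose else ∅ with hfdef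
    have hfprop : ∀ v ∈ B, f v ⊆ insert v S ∧ (f v).card = r ∧ f v ≠ S ∧
        ¬ fastSat sel (f v) σ := by
      intro v hvB
      have h := (Finset.mem_filter.mp hvB).2
      simp only [hfdef, dif_pos h]
      exact h.choose_spec
    have hmemv : ∀ v ∈ B, v ∈ f v := by
      intro v hvB
      obtain ⟨h1, h2, h3, _⟩ := hfprop v hvB
      by_contra hvnot
      have hsubS : f v ⊆ S := fun x hx => by
        rcases Finset.mem_insert.mp (h1 hx) with h | h
        · exact absurd (h ▸ hx) hvnot
        · exact h
      exact h3 (Finset.eq_of_subset_of_card_le hsubS (by omega))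
    apply Finset.card_le_card_of_injOn f
    · intro v hvB
      obtain ⟨_, h2, h3, h4⟩ := hfprop v hvB
      simp only [Finset.mem_coe, Finset.mem_erase, hIdef, Finset.mem_filter, Finset.mem_univ, true_and]
      exact ⟨h3, h2, h4⟩
    · intro v1 h1 v2 h2 heq
      have hv1 : v1 ∉ S := (Finset.mem_sdiff.mp (Finset.mem_filter.mp h1).1).2
      have hm1 : v1 ∈ f v2 := heq ▸ hmemv v1 h1
      have := (hfprop v2 h2).1 hm1
      rcases Finset.mem_insert.mp this with h | h
      · exact h
      · exact absurd h hv1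
  have hIerase : (I.erase S).card = I.card - 1 := Finset.card_erase_of_mem hSI
  -- the good vertices
  refine ⟨(spanF \ S) \ B, ?_, ?_, ?_, ?_⟩
  · -- cardinality
    have hsd : (spanF \ S).card = spanF.card - S.card := Finset.card_sdiff_of_subset hSsub
    have hcover : spanF \ S ⊆ ((spanF \ S) \ B) ∪ B := by
      intro x hx
      by_cases h : x ∈ B
      · exact Finset.mem_union_right _ h
      · exact Finset.mem_union_left _ (Finset.mem_sdiff.mpr ⟨hx, h⟩)
    have hc1 := Finset.card_le_card hcover
    have hc2 := Finset.card_union_le ((spanF \ S) \ B) B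
    have hSI1 : 1 ≤ I.card := Finset.card_pos.mpr ⟨S, hSI⟩
    rw [hS] at hsd
    omega
  · -- membership in span⁻(S) \ S
    intro v hvT
    have hv := (Finset.mem_sdiff.mp hvT).1
    have hv1 := Finset.mem_sdiff.mp hv
    have hv2 := (Finset.mem_filter.mp hv1.1).2
    exact ⟨hv1.2, hv2⟩
  · -- unique inconsistent constraint
    intro v hvT
    have hvsd := Finset.mem_sdiff.mp hvT
    have hnotB := hvsd.2
    have hgood : ∀ T' ⊆ insert v S, T'.card = r → T' ≠ S → fastSat sel T' σ := by
      intro T' hsub hcard hne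
      by_contra hbad
      exact hnotB (Finset.mem_filter.mpr ⟨hvsd.1, ⟨T', hsub, hcard, hne, hbad⟩⟩)
    refine ⟨S, ⟨Finset.subset_insert v S, hS, hSbad⟩, ?_⟩
    rintro T' ⟨h1, h2, h3⟩
    by_contra hne
    exact h3 (hgood T' h1 h2 hne)
  · -- conflicts
    intro v hvT
    have hvsd := Finset.mem_sdiff.mp hvT
    have hnotB := hvsd.2
    have hvS : v ∉ S := (Finset.mem_sdiff.mp hvsd.1).2
    have hvspan := (Finset.mem_filter.mp (Finset.mem_sdiff.mp hvsd.1).1).2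
    have hgood : ∀ T' ⊆ insert v S, T'.card = r → T' ≠ S → fastSat sel T' σ := by
      intro T' hsub hcard hne
      by_contra hbad
      exact hnotB (Finset.mem_filter.mpr ⟨hvsd.1, ⟨T', hsub, hcard, hne, hbad⟩⟩)
    exact fast_good_is_conflict hr sel hsel σ hσ S hS hSbad v hvS hvspan hgood
end
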